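/- arXiv:1601.02338 — 7 statements merged into one kernel-verified Lean document; each statement's English description precedes it below -/
import Mathlib

section
/- Let Ω ⊂ ℝⁿ be a bounded domain (nonempty bounded open connected set), f : Ω → ℝⁿ a continuous function whose image f(Ω) is open, and a ∈ Ω a point such that s := liminf_{q → ∂Ω} |f(q) − f(a)| > 0 (i.e., every sequence in Ω converging to a boundary point of Ω has liminf of |f(·) − f(a)| at least s). Then the open ball B(f(a), s) is contained in f(Ω). -/
open Metric Set

theorem stmt_0 (n : ℕ) (Ω : Set (EuclideanSpace ℝ (Fin n)))
    (hΩo : IsOpen Ω) (hΩc : IsConnected Ω) (hΩb : Bornology.IsBounded Ω)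
    (f : EuclideanSpace ℝ (Fin n) → EuclideanSpace ℝ (Fin n))
    (hf : ContinuousOn f Ω) (hfo : IsOpen (f '' Ω))
    (a : EuclideanSpace ℝ (Fin n)) (ha : a ∈ Ω) (s : ℝ) (hs : 0 < s)
    (hlim : ∀ ε > 0, ∃ K : Set (EuclideanSpace ℝ (Fin n)),
      IsCompact K ∧ K ⊆ Ω ∧ ∀ q ∈ Ω \ K, s - ε ≤ ‖f q - f a‖) :
    ball (f a) s ⊆ f '' Ω := by
  -- key: any point of the ball in the closure of f '' Ω is in f '' Ω
  have key : ∀ y ∈ ball (f a) s, y ∈ closure (f '' Ω) → y ∈ f '' Ω := by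
    intro y hy hycl
    have hd : dist y (f a) < s := mem_ball.mp hy
    set ε : ℝ := (s - dist y (f a)) / 2 with hε
    have hεpos : 0 < ε := by simp only [hε]; linarith
    obtain ⟨K, hKc, hKΩ, hK⟩ := hlim ε hεpos
    -- f '' K is compact
    have hfK : IsCompact (f '' K) := hKc.image_of_continuousOn (hf.mono hKΩ)
    -- y ∈ closure (f '' K)
    have hyK : y ∈ closure (f '' K) := by
      rw [_root_.mem_closure_iff] at hycl ⊢
      intro o ho hyo
      obtain ⟨z, hzo, q, hqΩ, rfl⟩ := hycl (o ∩ ball y ε) (ho.inter isOpen_ball)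
        ⟨hyo, mem_ball_self hεpos⟩
      refine ⟨f q, hzo.1, q, ?_, rfl⟩
      by_contra hqK
      have h1 : s - ε ≤ ‖f q - f a‖ := hK q ⟨hqΩ, hqK⟩
      have h2 : dist (f q) (f a) ≤ dist (f q) y + dist y (f a) := dist_triangle _ _ _
      have h3 : dist (f q) y < ε := mem_ball.mp hzo.2
      rw [← dist_eq_norm] at h1
      have : dist y (f a) = s - 2 * ε := by rw [hε]; ring
      linarith
    rw [hfK.isClosed.closure_eq] at hyK
    obtain ⟨q, hqK, rfl⟩ := hyK
    exact ⟨q, hKΩ hqK, rfl⟩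
  -- connectedness argument
  have hpre : IsPreconnected (ball (f a) s) := (convex_ball (f a) s).isPreconnected
  refine hpre.subset_left_of_subset_union hfo isClosed_closure.isOpen_compl
    (disjoint_compl_right.mono_left subset_closure) ?_
    ⟨f a, mem_ball_self hs, a, ha, rfl⟩
  intro y hy
  by_cases h : y ∈ closure (f '' Ω)
  · exact Or.inl (key y hy h)
  · exact Or.inr h
end

section
/- Let F be a holomorphic function on the open unit disc 𝔻 ⊂ ℂ with sup_{z ∈ 𝔻} (1 − |z|²)·|F′(z)| ≤ 1 and F′(0) = 1. Then for all z with |z| < 1/√3, Re F′(z) ≥ (1 − √3·|z|)/(1 − |z|/√3)³. -/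
set_option maxHeartbeats 1000000

open Metric Complex

private lemma nsq (z : ℂ) : ‖z‖^2 = z.re^2 + z.im^2 := by
  rw [Complex.sq_norm, Complex.normSq_apply]; ring

private lemma one_sub_ne {w : ℂ} (h : ‖w‖ < 1) : (1 : ℂ) - w ≠ 0 := by
  intro hc
  have : w = 1 := by linear_combination -hc
  rw [this] at h; simp at h

private lemma blaschke_lt_one {v : ℝ} {u : ℂ} (hv : |v| < 1) (hu : ‖u‖ < 1) :
    ‖((v:ℂ) - u) / (1 - v*u)‖ < 1 := by
  have hvu : ‖(v:ℂ)*u‖ < 1 := by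
    rw [norm_mul, Complex.norm_real, Real.norm_eq_abs]
    nlinarith [norm_nonneg u, abs_nonneg v]
  have hne : (1 : ℂ) - (v:ℂ)*u ≠ 0 := one_sub_ne hvu
  rw [norm_div, div_lt_one (norm_pos_iff.mpr hne)]
  have h1 := nsq ((v:ℂ) - u)
  have h2 := nsq (1 - (v:ℂ)*u)
  have h3 := nsq u
  simp only [Complex.sub_re, Complex.sub_im, Complex.mul_re, Complex.mul_im,
    Complex.ofReal_re, Complex.ofReal_im, Complex.one_re, Complex.one_im] at h1 h2
  have hv2 : v^2 < 1 := by nlinarith [abs_nonneg v, _root_.sq_abs v]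
  have hu2 : u.re^2 + u.im^2 < 1 := by nlinarith [norm_nonneg u, nsq u]
  have hdiff : ‖1 - (v:ℂ)*u‖^2 - ‖(v:ℂ) - u‖^2 = (1 - v^2)*(1 - (u.re^2+u.im^2)) := by
    rw [h1, h2]; ring
  nlinarith [hdiff, hv2, hu2, norm_nonneg ((v:ℂ) - u), norm_nonneg (1 - (v:ℂ)*u),
    mul_pos (sub_pos.mpr hv2) (sub_pos.mpr hu2)]

private lemma schwarz_pick_two (q : ℂ → ℂ) (hq : DifferentiableOn ℂ q (ball 0 1))
    (hb : ∀ ζ ∈ ball (0:ℂ) 1, ‖q ζ‖ < 1)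
    {β v ζ : ℝ} (hβ : |β| < 1) (hv : |v| < 1) (hζ : |ζ| < 1)
    (hqβ : q (β:ℂ) = (v:ℂ)) :
    ‖((v:ℂ) - q ζ) / (1 - v * q ζ)‖ ≤ |(β - ζ)/(1 - β*ζ)| := by
  have hβζ : (1:ℂ) - (β:ℂ)*(ζ:ℂ) ≠ 0 := by
    apply one_sub_ne
    rw [norm_mul, Complex.norm_real, Complex.norm_real, Real.norm_eq_abs, Real.norm_eq_abs]
    nlinarith [abs_nonneg β, abs_nonneg ζ]
  -- the Möbius factor ψ_β : w ↦ (β - w)/(1 - β w), maps ball to ball, involution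
  set ψ : ℂ → ℂ := fun w => ((β:ℂ) - w)/(1 - β*w) with hψdef
  have hψmem : ∀ w ∈ ball (0:ℂ) 1, ψ w ∈ ball (0:ℂ) 1 := by
    intro w hw
    rw [mem_ball_zero_iff] at hw ⊢
    exact blaschke_lt_one hβ hw
  have hψdiff : DifferentiableOn ℂ ψ (ball 0 1) := by
    intro w hw
    apply DifferentiableWithinAt.div
    · fun_prop
    · fun_prop
    · apply one_sub_ne
      rw [norm_mul, Complex.norm_real, Real.norm_eq_abs]
      rw [mem_ball_zero_iff] at hw
      nlinarith [abs_nonneg β, norm_nonneg w]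
  -- the composed map
  set Q : ℂ → ℂ := fun w => ((v:ℂ) - q (ψ w))/(1 - v * q (ψ w)) with hQdef
  have hQdiff : DifferentiableOn ℂ Q (ball 0 1) := by
    have hqψ : DifferentiableOn ℂ (fun w => q (ψ w)) (ball 0 1) :=
      hq.comp hψdiff hψmem
    intro w hw
    apply DifferentiableWithinAt.div
    · exact (differentiableWithinAt_const _).sub (hqψ w hw)
    · exact (differentiableWithinAt_const _).sub
        ((differentiableWithinAt_const _).mul (hqψ w hw))
    · apply one_sub_ne
      rw [norm_mul, Complex.norm_real, Real.norm_eq_abs]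
      have := hb _ (hψmem w hw)
      nlinarith [abs_nonneg v, norm_nonneg (q (ψ w))]
  have hQmaps : Set.MapsTo Q (ball 0 1) (ball 0 1) := by
    intro w hw
    rw [mem_ball_zero_iff]
    exact blaschke_lt_one hv (hb _ (hψmem w hw))
  have hQ0 : Q 0 = 0 := by
    have hψ0 : ψ 0 = (β:ℂ) := by simp [hψdef]
    have hvne : (1:ℂ) - (v:ℂ)*(v:ℂ) ≠ 0 := by
      apply one_sub_ne
      rw [norm_mul, Complex.norm_real, Real.norm_eq_abs]
      nlinarith [abs_nonneg v]
    simp [hQdef, hψ0, hqβ, hvne]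
  -- the point ξ = ψ(ζ) (real)
  set ξ : ℝ := (β - ζ)/(1 - β*ζ) with hξdef
  have hξlt : |ξ| < 1 := by
    have := blaschke_lt_one (u := (ζ:ℂ)) hβ
      (by rw [Complex.norm_real, Real.norm_eq_abs]; exact hζ)
    rw [show ((β:ℂ) - (ζ:ℂ))/(1 - (β:ℂ)*(ζ:ℂ)) = ((ξ:ℝ):ℂ) by push_cast [hξdef]; ring,
      Complex.norm_real, Real.norm_eq_abs] at this
    exact this
  have hψξ : ψ ((ξ:ℝ):ℂ) = (ζ:ℂ) := by
    have h2 : (1:ℂ) - (β:ℂ)*(ξ:ℂ) ≠ 0 := by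
      apply one_sub_ne
      rw [norm_mul, Complex.norm_real, Complex.norm_real, Real.norm_eq_abs, Real.norm_eq_abs]
      nlinarith [abs_nonneg β, abs_nonneg ξ]
    have hβ2 : ((1:ℂ) - (β:ℂ)^2) ≠ 0 := by
      rw [sq]
      apply one_sub_ne
      rw [norm_mul, Complex.norm_real, Real.norm_eq_abs]
      nlinarith [abs_nonneg β]
    rw [hψdef]
    push_cast [hξdef]
    field_simp [hβ2]
    have hinv : ((1:ℂ)-(β:ℂ)^2) * ((1:ℂ)-(β:ℂ)^2)⁻¹ = 1 := mul_inv_cancel₀ hβ2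
    linear_combination (ζ:ℂ) * hinv
  have hSch := Complex.norm_le_norm_of_mapsTo_ball hQdiff (hQmaps.mono_right ball_subset_closedBall) hQ0
    (z := ((ξ:ℝ):ℂ)) (by rw [Complex.norm_real, Real.norm_eq_abs]; exact hξlt)
  rw [Complex.norm_real, Real.norm_eq_abs] at hSch
  have : Q ((ξ:ℝ):ℂ) = ((v:ℂ) - q ζ) / (1 - v * q ζ) := by rw [hQdef]; simp only [hψξ]
  rwa [this] at hSch

private lemma wedge {v ρ x y : ℝ} (hv0 : 0 < v) (hvlt : v < 1) (hρ0 : 0 ≤ ρ) (hρ1 : ρ < 1)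
    (hxy : x^2 + y^2 < 1)
    (hsq : (v - x)^2 + y^2 ≤ ρ^2 * ((1 - v*x)^2 + (v*y)^2)) :
    0 ≤ x*(1 - v*ρ) - (v - ρ) := by
  have hx1 : x < 1 := by nlinarith [sq_nonneg y]
  have h1vx : 0 < 1 - v*x := by nlinarith [mul_pos hv0 (sub_pos.mpr hx1)]
  have hzsq : 0 ≤ (1 - (ρ*v)^2) * y^2 := by
    apply mul_nonneg _ (sq_nonneg y)
    have h6 : 0 ≤ ρ*v := mul_nonneg hρ0 hv0.le
    have h7 : ρ*v < 1 := by nlinarith [mul_nonneg hρ0 (sub_nonneg.2 hvlt.le)]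
    nlinarith [h6, h7]
  have h2 : (v - x)^2 ≤ (ρ*(1 - v*x))^2 := by nlinarith [hsq, hzsq]
  have h3 : v - x ≤ ρ*(1 - v*x) := le_of_sq_le_sq h2 (mul_nonneg hρ0 h1vx.le)
  have hre : x*(1 - v*ρ) - (v - ρ) = ρ*(1-v*x) - (v-x) := by ring
  rw [hre]; linarith

private lemma nonneg_factor {A B : ℝ} (h : 0 ≤ A * B) (hA : 0 < A) : 0 ≤ B := by
  nlinarith [h, hA]

private lemma claimB {a : ℝ} (ha0 : 0 < a) (ha1 : a < 1)
    (g : ℂ → ℂ) (hg : DifferentiableOn ℂ g (ball 0 1))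
    (hgb : ∀ w ∈ ball (0:ℂ) 1, (1 - ‖w‖^2) * ‖g w‖ ≤ 1)
    (hga : g (-(a:ℂ)) = (1 - (a:ℂ)^2)⁻¹)
    {τ : ℝ} (hτ0 : 0 ≤ τ) (hτa : τ ≤ a) :
    a - 3*a^3 + τ*(1+a^2) ≤ (1-a^2)*(a^3 + a + τ*(1-3*a^2)) * (g (-(τ:ℂ))).re := by
  set X : ℝ := (g (-(τ:ℂ))).re with hX
  clear_value X
  have ha2 : 0 < 1 - a^2 := by nlinarith
  have key : ∀ s : ℝ, a < s → s < 1 →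
      (-s^3 - a*s^2 + (1 + a*τ - a^2)*s + τ) ≤
        ((1 - s^2)*((a-τ)*s^2 + (1-a*τ)*s + τ*(1-a^2))) * X := by
    intro s hs hs1
    have hs0 : 0 < s := ha0.trans hs
    have hs2 : s^2 < 1 := by nlinarith
    have hsa2 : a^2 < s^2 := by nlinarith
    have hsC : (s:ℂ) ≠ 0 := Complex.ofReal_ne_zero.mpr hs0.ne'
    -- the rescaled function
    set q : ℂ → ℂ := fun ζ => (1 - (s:ℂ)^2) * g ((s:ℂ)*ζ) with hqdef
    have hmapss : ∀ ζ : ℂ, ζ ∈ ball (0:ℂ) 1 → (s:ℂ)*ζ ∈ ball (0:ℂ) 1 := by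
      intro ζ hζ
      rw [mem_ball_zero_iff] at hζ ⊢
      rw [norm_mul, Complex.norm_real, Real.norm_eq_abs, abs_of_pos hs0]
      nlinarith [norm_nonneg ζ]
    have hqdiff : DifferentiableOn ℂ q (ball 0 1) := by
      apply DifferentiableOn.const_mul
      exact hg.comp ((differentiableOn_id.const_mul _)) hmapss
    have hnorm1s : ‖(1 - (s:ℂ)^2)‖ = 1 - s^2 := by
      rw [show (1 - (s:ℂ)^2) = (((1-s^2 : ℝ)):ℂ) by push_cast; ring,
        Complex.norm_real, Real.norm_eq_abs, abs_of_pos (by nlinarith)]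
    have hqb : ∀ ζ ∈ ball (0:ℂ) 1, ‖q ζ‖ < 1 := by
      intro ζ hζ
      have hm := hmapss ζ hζ
      have hgbm := hgb _ hm
      rw [mem_ball_zero_iff] at hζ
      set t := ‖ζ‖ with ht
      set G := ‖g ((s:ℂ)*ζ)‖ with hG
      have hGn : 0 ≤ G := norm_nonneg _
      have hnq : ‖q ζ‖ = (1 - s^2) * G := by
        rw [hqdef]; dsimp only; rw [norm_mul, hnorm1s]
      have hsn : ‖(s:ℂ)*ζ‖ = s * t := by
        rw [norm_mul, Complex.norm_real, Real.norm_eq_abs, abs_of_pos hs0]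
      rw [hsn] at hgbm
      rw [hnq]
      rcases eq_or_lt_of_le hGn with hG0 | hGpos
      · rw [← hG0]; norm_num
      · have h3 : (1 - s^2*t^2)*G = (1-s^2)*G + s^2*(1-t^2)*G := by ring
        have h2 : 0 < s^2*(1-t^2)*G := by
          apply mul_pos (mul_pos (by positivity) _) hGpos
          nlinarith [norm_nonneg ζ]
        have h1 : (1 - s^2*t^2)*G ≤ 1 := by nlinarith [hgbm]
        linarith
    -- parameters
    set β : ℝ := -(a/s) with hβdef
    set v : ℝ := (1-s^2)/(1-a^2) with hvdef
    set ζr : ℝ := -(τ/s) with hζrdef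
    clear_value β v ζr
    have hβ1 : |β| < 1 := by
      rw [hβdef, abs_neg, abs_div, abs_of_pos ha0, abs_of_pos hs0, div_lt_one hs0]
      exact hs
    have hv0 : 0 < v := by rw [hvdef]; exact div_pos (by nlinarith) ha2
    have hvlt : v < 1 := by rw [hvdef, div_lt_one ha2]; nlinarith
    have hv1 : |v| < 1 := by rw [abs_of_pos hv0]; exact hvlt
    have hζ1 : |ζr| < 1 := by
      rw [hζrdef, abs_neg, abs_div, _root_.abs_of_nonneg hτ0, _root_.abs_of_pos hs0,
        div_lt_one hs0]
      linarith
    have haC : ((1:ℂ) - (a:ℂ)^2) ≠ 0 := by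
      rw [show ((1:ℂ) - (a:ℂ)^2) = (((1-a^2:ℝ)):ℂ) by push_cast; ring]
      exact Complex.ofReal_ne_zero.mpr (by nlinarith)
    have hqβ : q ((β:ℝ):ℂ) = ((v:ℝ):ℂ) := by
      have harg : (s:ℂ)*((β:ℝ):ℂ) = -(a:ℂ) := by
        rw [hβdef]; push_cast; field_simp
        try ring
      rw [hqdef]; dsimp only; rw [harg, hga, hvdef]
      push_cast
      field_simp
    have hSP := schwarz_pick_two q hqdiff hqb hβ1 hv1 hζ1 hqβ
    -- identify the point and the RHS
    have hargτ : (s:ℂ)*((ζr:ℝ):ℂ) = -(τ:ℂ) := by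
      rw [hζrdef]; push_cast; field_simp
      try ring
    have hu : q ((ζr:ℝ):ℂ) = (1 - (s:ℂ)^2) * g (-(τ:ℂ)) := by
      rw [hqdef]; dsimp only; rw [hargτ]
    have hsaτ : 0 < s^2 - a*τ := by nlinarith
    set ρ : ℝ := s*(a-τ)/(s^2 - a*τ) with hρdef
    clear_value ρ
    have hρ0 : 0 ≤ ρ := by
      rw [hρdef]
      exact div_nonneg (mul_nonneg hs0.le (by linarith)) hsaτ.le
    have hρ1 : ρ < 1 := by
      rw [hρdef, div_lt_one hsaτ]; nlinarith
    have hrhs : |(β - ζr)/(1 - β*ζr)| = ρ := by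
      have e1 : β - ζr = (τ - a)/s := by
        rw [hβdef, hζrdef]; field_simp
        try ring
      have e2 : 1 - β*ζr = (s^2 - a*τ)/s^2 := by
        rw [hβdef, hζrdef]; field_simp
        try ring
      have e3 : (β - ζr)/(1 - β*ζr) = -ρ := by
        rw [e1, e2, hρdef]
        field_simp [hsaτ.ne']
        try ring
      rw [e3, abs_neg, _root_.abs_of_nonneg hρ0]
    rw [hrhs, hu] at hSP
    set u : ℂ := (1 - (s:ℂ)^2) * g (-(τ:ℂ)) with hudef
    clear_value u
    have humem : ‖u‖ < 1 := by
      have := hqb ((ζr:ℝ):ℂ)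
        (by rw [mem_ball_zero_iff, Complex.norm_real, Real.norm_eq_abs]; exact hζ1)
      rwa [hu] at this
    have hvune : (1:ℂ) - (v:ℂ)*u ≠ 0 := by
      apply one_sub_ne
      rw [norm_mul, Complex.norm_real, Real.norm_eq_abs]
      nlinarith [norm_nonneg u, abs_nonneg v]
    have hSP' : ‖(v:ℂ) - u‖ ≤ ρ * ‖1 - (v:ℂ)*u‖ := by
      rw [norm_div, div_le_iff₀ (norm_pos_iff.mpr hvune)] at hSP
      exact hSP
    set x : ℝ := u.re with hxdef
    set y : ℝ := u.im with hydef
    clear_value x y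
    have hxy : x^2 + y^2 < 1 := by
      have h := nsq u
      rw [← hxdef, ← hydef] at h
      nlinarith [norm_nonneg u, humem, h]
    have hsq : (v - x)^2 + y^2 ≤ ρ^2 * ((1 - v*x)^2 + (v*y)^2) := by
      have h1 := nsq ((v:ℂ) - u)
      have h2 := nsq (1 - (v:ℂ)*u)
      simp only [Complex.sub_re, Complex.sub_im, Complex.mul_re, Complex.mul_im,
        Complex.ofReal_re, Complex.ofReal_im, Complex.one_re, Complex.one_im] at h1 h2
      have hsq0 : ‖(v:ℂ) - u‖^2 ≤ ρ^2 * ‖1 - (v:ℂ)*u‖^2 := by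
        nlinarith [hSP', norm_nonneg ((v:ℂ) - u), norm_nonneg (1 - (v:ℂ)*u), hρ0]
      rw [h1, h2] at hsq0
      rw [← hxdef, ← hydef] at hsq0
      nlinarith [hsq0]
    have hT : 0 ≤ x*(1 - v*ρ) - (v - ρ) := wedge hv0 hvlt hρ0 hρ1 hxy hsq
    have hxX : x = (1 - s^2) * X := by
      rw [hxdef, hudef, hX]
      simp [Complex.mul_re, ← Complex.ofReal_pow]
      try ring
    have hID : (x*(1 - v*ρ) - (v - ρ)) * ((1-a^2)*(s^2 - a*τ)) =
        (s - a) * ((((1 - s^2)*((a-τ)*s^2 + (1-a*τ)*s + τ*(1-a^2))) * X) -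
          (-s^3 - a*s^2 + (1 + a*τ - a^2)*s + τ)) := by
      rw [hxX, hρdef, hvdef]
      field_simp [ha2.ne', hsaτ.ne']
      ring
    have h5 : 0 ≤ (s - a) * ((((1 - s^2)*((a-τ)*s^2 + (1-a*τ)*s + τ*(1-a^2))) * X) -
        (-s^3 - a*s^2 + (1 + a*τ - a^2)*s + τ)) := by
      rw [← hID]
      exact mul_nonneg hT (by positivity)
    have h6 := nonneg_factor h5 (sub_pos.mpr hs)
    linarith [h6]
  -- limit s → a⁺
  set W : ℝ → ℝ := fun s => ((1 - s^2)*((a-τ)*s^2 + (1-a*τ)*s + τ*(1-a^2))) * X -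
    (-s^3 - a*s^2 + (1 + a*τ - a^2)*s + τ) with hW
  have hWc : Continuous W := by rw [hW]; fun_prop
  have hlim : Filter.Tendsto W (nhdsWithin a (Set.Ioi a)) (nhds (W a)) :=
    (hWc.tendsto a).mono_left nhdsWithin_le_nhds
  have hev : ∀ᶠ s in nhdsWithin a (Set.Ioi a), 0 ≤ W s := by
    filter_upwards [Ioo_mem_nhdsGT_of_mem ⟨le_refl a, ha1⟩] with s hs
    have := key s hs.1 hs.2
    rw [hW]; dsimp only; linarith
  have h0W : 0 ≤ W a := ge_of_tendsto hlim hev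
  rw [hW] at h0W; dsimp only at h0W
  nlinarith [h0W]

private lemma mob_sq (a : ℝ) (w : ℂ) :
    ‖1 + (a:ℂ)*w‖^2 - ‖w + (a:ℂ)‖^2 = (1-a^2)*(1-‖w‖^2) := by
  have h1 := nsq (1 + (a:ℂ)*w)
  have h2 := nsq (w + (a:ℂ))
  have h3 := nsq w
  simp only [Complex.add_re, Complex.add_im, Complex.mul_re, Complex.mul_im,
    Complex.one_re, Complex.one_im, Complex.ofReal_re, Complex.ofReal_im] at h1 h2
  rw [h1, h2, h3]; ring

theorem stmt_2 (F : ℂ → ℂ) (hF : DifferentiableOn ℂ F (ball 0 1))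
    (hB : ∀ z ∈ ball (0 : ℂ) 1, (1 - ‖z‖ ^ 2) * ‖deriv F z‖ ≤ 1)
    (hd : deriv F 0 = 1) :
    ∀ z : ℂ, ‖z‖ < 1 / Real.sqrt 3 →
      (1 - Real.sqrt 3 * ‖z‖) / (1 - ‖z‖ / Real.sqrt 3) ^ 3 ≤ (deriv F z).re := by
  intro z hz
  have h3 : (0:ℝ) < Real.sqrt 3 := Real.sqrt_pos.mpr (by norm_num)
  have h3sq : Real.sqrt 3 ^ 2 = 3 := Real.sq_sqrt (by norm_num)
  have h31 : 1 < Real.sqrt 3 := by nlinarith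
  set a : ℝ := (Real.sqrt 3)⁻¹ with hadef
  have ha0 : 0 < a := by rw [hadef]; positivity
  have ha2 : a^2 = 1/3 := by rw [hadef, inv_pow, h3sq]; norm_num
  have ha1 : a < 1 := by nlinarith
  have ha2' : (0:ℝ) < 1 - a^2 := by nlinarith
  set x : ℝ := ‖z‖ with hxdef
  have hx0 : 0 ≤ x := norm_nonneg z
  have hxa : x < a := by rw [hadef, ← one_div]; exact hz
  have hax : 0 < 1 - a*x := by nlinarith
  have haxC : ((1:ℂ) + (a:ℂ)*(-(x:ℂ))) ≠ 0 := by
    rw [show ((1:ℂ) + (a:ℂ)*(-(x:ℂ))) = (((1-a*x:ℝ)):ℂ) by push_cast; ring]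
    exact Complex.ofReal_ne_zero.mpr hax.ne'
  have haC : ((1:ℂ) - (a:ℂ)^2) ≠ 0 := by
    rw [show ((1:ℂ) - (a:ℂ)^2) = (((1-a^2:ℝ)):ℂ) by push_cast; ring]
    exact Complex.ofReal_ne_zero.mpr ha2'.ne'
  set f : ℂ → ℂ := deriv F with hfdef
  have hf : DifferentiableOn ℂ f (ball 0 1) :=
    ((hF.analyticOnNhd isOpen_ball).deriv).differentiableOn
  -- rotation
  set e : ℂ := if z = 0 then 1 else z/(‖z‖:ℂ) with hedef
  have he : ‖e‖ = 1 := by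
    rw [hedef]; split_ifs with h
    · simp
    · have hzne : ‖z‖ ≠ 0 := norm_ne_zero_iff.mpr h
      rw [norm_div, Complex.norm_real, norm_norm, div_self hzne]
  have hez : e * (x:ℂ) = z := by
    rw [hedef]; split_ifs with h
    · simp [h, hxdef]
    · have hzC : ((‖z‖:ℝ):ℂ) ≠ 0 := Complex.ofReal_ne_zero.mpr (norm_ne_zero_iff.mpr h)
      rw [hxdef]
      exact div_mul_cancel₀ z hzC
  set f1 : ℂ → ℂ := fun ζ => f (e*ζ) with hf1def
  have hmape : ∀ ζ ∈ ball (0:ℂ) 1, e*ζ ∈ ball (0:ℂ) 1 := by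
    intro ζ hζ
    rw [mem_ball_zero_iff] at hζ ⊢
    rw [norm_mul, he, one_mul]; exact hζ
  have hf1 : DifferentiableOn ℂ f1 (ball 0 1) :=
    hf.comp (differentiableOn_id.const_mul e) hmape
  have hb1 : ∀ w ∈ ball (0:ℂ) 1, (1-‖w‖^2)*‖f1 w‖ ≤ 1 := by
    intro w hw
    have := hB _ (hmape w hw)
    rw [norm_mul, he, one_mul] at this
    exact this
  have hf10 : f1 0 = 1 := by rw [hf1def]; simp only [mul_zero]; exact hd
  -- Möbius conjugation
  set g : ℂ → ℂ := fun w => f1 ((w + a)/(1 + a*w)) * ((1 - (a:ℂ)^2)/(1 + a*w)^2) with hgdef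
  have hdenm : ∀ w ∈ ball (0:ℂ) 1, ((1:ℂ) + (a:ℂ)*w) ≠ 0 := by
    intro w hw hc
    rw [mem_ball_zero_iff] at hw
    have h1 : (a:ℂ)*w = -1 := by linear_combination hc
    have h2 : ‖(a:ℂ)*w‖ = 1 := by rw [h1]; simp
    rw [norm_mul, Complex.norm_real, Real.norm_eq_abs, _root_.abs_of_pos ha0] at h2
    nlinarith [norm_nonneg w]
  have hmapsm : ∀ w ∈ ball (0:ℂ) 1, (w + (a:ℂ))/(1 + a*w) ∈ ball (0:ℂ) 1 := by
    intro w hw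
    have hne := hdenm w hw
    rw [mem_ball_zero_iff] at hw ⊢
    rw [norm_div, div_lt_one (norm_pos_iff.mpr hne)]
    have := mob_sq a w
    nlinarith [norm_nonneg (w + (a:ℂ)), norm_nonneg (1 + (a:ℂ)*w), norm_nonneg w]
  have hgdiff : DifferentiableOn ℂ g (ball 0 1) := by
    apply DifferentiableOn.mul
    · exact hf1.comp (by
        intro w hw
        exact DifferentiableWithinAt.div (by fun_prop) (by fun_prop) (hdenm w hw)) hmapsm
    · intro w hw
      exact DifferentiableWithinAt.div (by fun_prop) (by fun_prop)
        (pow_ne_zero 2 (hdenm w hw))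
  have hgb : ∀ w ∈ ball (0:ℂ) 1, (1-‖w‖^2)*‖g w‖ ≤ 1 := by
    intro w hw
    have hne := hdenm w hw
    have hD : (0:ℝ) < ‖(1:ℂ) + (a:ℂ)*w‖^2 := pow_pos (norm_pos_iff.mpr hne) 2
    have hmw := hb1 _ (hmapsm w hw)
    have hmn : ‖(w + (a:ℂ))/(1 + a*w)‖^2 = ‖w + (a:ℂ)‖^2/‖(1:ℂ) + (a:ℂ)*w‖^2 := by
      rw [norm_div, div_pow]
    rw [hmn] at hmw
    have hng : ‖g w‖ = ‖f1 ((w + (a:ℂ))/(1 + a*w))‖ * ((1-a^2)/‖(1:ℂ) + (a:ℂ)*w‖^2) := by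
      rw [hgdef]
      dsimp only
      rw [norm_mul, norm_div, norm_pow]
      congr 2
      rw [show ((1:ℂ) - (a:ℂ)^2) = (((1-a^2:ℝ)):ℂ) by push_cast; ring,
        Complex.norm_real, Real.norm_eq_abs, _root_.abs_of_pos ha2']
    rw [hng]
    have hDN := mob_sq a w
    have e5 : (1-‖w‖^2)*((1-a^2)/‖(1:ℂ) + (a:ℂ)*w‖^2)
        = 1 - ‖w + (a:ℂ)‖^2/‖(1:ℂ) + (a:ℂ)*w‖^2 := by
      have e6 : (1-‖w‖^2)*((1-a^2)/‖(1:ℂ) + (a:ℂ)*w‖^2)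
          = ((1-a^2)*(1-‖w‖^2))/‖(1:ℂ) + (a:ℂ)*w‖^2 := by ring
      rw [e6, ← hDN, sub_div, div_self hD.ne']
    calc (1-‖w‖^2)*(‖f1 ((w + (a:ℂ))/(1 + a*w))‖ * ((1-a^2)/‖(1:ℂ) + (a:ℂ)*w‖^2))
        = (1 - ‖w + (a:ℂ)‖^2/‖(1:ℂ) + (a:ℂ)*w‖^2) * ‖f1 ((w + (a:ℂ))/(1 + a*w))‖ := by
          rw [← e5]; ring
      _ ≤ 1 := hmw
  have hga : g (-(a:ℂ)) = (1 - (a:ℂ)^2)⁻¹ := by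
    rw [hgdef]
    dsimp only
    rw [show ((-(a:ℂ)) + (a:ℂ))/(1 + (a:ℂ)*(-(a:ℂ))) = 0 by
      rw [neg_add_cancel, zero_div], hf10]
    rw [show ((1:ℂ) + (a:ℂ)*(-(a:ℂ))) = (1 - (a:ℂ)^2) by ring]
    field_simp
    try ring
  -- apply the key estimate
  set τ : ℝ := (a-x)/(1-a*x) with hτdef
  have hτ0 : 0 ≤ τ := div_nonneg (by linarith) hax.le
  have hτa : τ ≤ a := by rw [hτdef, div_le_iff₀ hax]; nlinarith
  have hτ1 : 1 - a*τ = (1-a^2)/(1-a*x) := by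
    rw [hτdef]; field_simp; ring
  have hτ1' : 0 < 1 - a*τ := by rw [hτ1]; positivity
  have hτC : ((1:ℂ) + (a:ℂ)*(-(τ:ℂ))) ≠ 0 := by
    rw [show ((1:ℂ) + (a:ℂ)*(-(τ:ℂ))) = (((1-a*τ:ℝ)):ℂ) by push_cast; ring]
    exact Complex.ofReal_ne_zero.mpr hτ1'.ne'
  have hcb := claimB ha0 ha1 g hgdiff hgb hga hτ0 hτa
  -- identify g (-τ)
  have harg : ((-(τ:ℂ)) + (a:ℂ))/(1 + (a:ℂ)*(-(τ:ℂ))) = (x:ℂ) := by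
    rw [div_eq_iff hτC]
    rw [hτdef]
    push_cast
    have hxC : ((1:ℂ) - (a:ℂ)*(x:ℂ)) ≠ 0 := by
      rw [show ((1:ℂ) - (a:ℂ)*(x:ℂ)) = (((1-a*x:ℝ)):ℂ) by push_cast; ring]
      exact Complex.ofReal_ne_zero.mpr hax.ne'
    field_simp
    ring
  have grel : g (-(τ:ℂ)) = f1 ((x:ℝ):ℂ) * (((1-a^2)/(1-a*τ)^2 : ℝ):ℂ) := by
    rw [hgdef]
    dsimp only
    rw [harg]
    congr 1
    rw [show ((1:ℂ) + (a:ℂ)*(-(τ:ℂ))) = (((1-a*τ:ℝ)):ℂ) by push_cast; ring]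
    push_cast
    ring
  have Xrel : (g (-(τ:ℂ))).re = (f1 ((x:ℝ):ℂ)).re * ((1-a^2)/(1-a*τ)^2) := by
    rw [grel, Complex.mul_re, Complex.ofReal_re, Complex.ofReal_im]
    ring
  set R : ℝ := (f1 ((x:ℝ):ℂ)).re with hRdef
  have e1 : a - 3*a^3 + τ*(1+a^2) = 4/3*τ := by linear_combination (τ - 3*a) * ha2
  have e2 : (1-a^2)*(a^3 + a + τ*(1-3*a^2)) = 8/9*a := by
    linear_combination (-(a*(a^2+1/3)) - 3*τ*(1-a^2)) * ha2
  rw [e1, e2, Xrel] at hcb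
  -- hcb : 4/3*τ ≤ 8/9*a*(R*((1-a^2)/(1-a*τ)^2))
  have hR3 : 3*τ ≤ 2*a*(R*((1-a^2)/(1-a*τ)^2)) := by linarith [hcb]
  have e3 : (1-a^2)/(1-a*τ)^2 = (1-a*x)^2/(1-a^2) := by
    rw [hτ1]; field_simp
  rw [e3] at hR3
  have h10 : 3*(a-x)*(1-a^2) ≤ 2*a*R*(1-a*x)^3 := by
    have hpos : (0:ℝ) < (1-a*x)*(1-a^2) := mul_pos hax ha2'
    have h11 := mul_le_mul_of_nonneg_right hR3 hpos.le
    calc 3*(a-x)*(1-a^2) = 3*τ*((1-a*x)*(1-a^2)) := by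
          rw [hτdef]; field_simp
      _ ≤ 2*a*(R*((1-a*x)^2/(1-a^2)))*((1-a*x)*(1-a^2)) := h11
      _ = 2*a*R*(1-a*x)^3 := by field_simp
  -- final rewriting of the goal
  have hR : R = (f z).re := by rw [hRdef, hf1def]; dsimp only; rw [hez]
  have hsa : Real.sqrt 3 = a⁻¹ := by rw [hadef, inv_inv]
  have hgoal1 : (1:ℝ) - Real.sqrt 3 * x = (a-x)/a := by
    rw [hsa]; field_simp
  have hgoal2 : (1:ℝ) - x/Real.sqrt 3 = 1 - a*x := by
    rw [hsa, div_eq_mul_inv, inv_inv]; ring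
  rw [hgoal1, hgoal2, ← hR]
  rw [div_le_iff₀ (by positivity : (0:ℝ) < (1-a*x)^3), div_le_iff₀ ha0]
  have e7 : 3*(a-x)*(1-a^2) = 2*(a-x) := by linear_combination (-3*(a-x))*ha2
  linarith [h10, e7]
end

section
/- Let F : 𝔻 → 𝔻 be holomorphic on the open unit disc with a = F(0). Then for all z ∈ 𝔻: |F(z) − ((1 − |z|²)/(1 − |z|²|a|²))·a| ≤ |z|·(1 − |a|²)/(1 − |z|²·|a|²). -/
open Metric Set Complex

lemma normSq_mobius_id (a u : ℂ) :
    Complex.normSq (1 - (starRingEnd ℂ) a * u) - Complex.normSq (u - a) =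
      (1 - Complex.normSq a) * (1 - Complex.normSq u) := by
  simp [Complex.normSq_apply, Complex.mul_re, Complex.mul_im, Complex.sub_re, Complex.sub_im]
  ring

lemma den_ne_zero {a u : ℂ} (ha : ‖a‖ < 1) (hu : ‖u‖ < 1) :
    (1 : ℂ) - (starRingEnd ℂ) a * u ≠ 0 := by
  intro h
  have h1 : (starRingEnd ℂ) a * u = 1 := by linear_combination -h
  have : ‖(starRingEnd ℂ) a * u‖ < 1 := by
    rw [norm_mul, RCLike.norm_conj]
    calc ‖a‖ * ‖u‖ ≤ ‖a‖ * 1 := by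
          exact mul_le_mul_of_nonneg_left hu.le (norm_nonneg _)
      _ < 1 := by simpa using ha
  rw [h1] at this; simp at this

set_option maxHeartbeats 1000000 in
theorem stmt_6 (F : ℂ → ℂ) (hF : DifferentiableOn ℂ F (ball 0 1))
    (hmaps : MapsTo F (ball (0 : ℂ) 1) (ball (0 : ℂ) 1))
    (a : ℂ) (ha : F 0 = a) :
    ∀ z ∈ ball (0 : ℂ) 1,
      ‖F z - ((1 - ‖z‖ ^ 2) / (1 - ‖z‖ ^ 2 * ‖a‖ ^ 2) : ℝ) • a‖ ≤
        ‖z‖ * (1 - ‖a‖ ^ 2) / (1 - ‖z‖ ^ 2 * ‖a‖ ^ 2) := by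
  intro z hz
  have h0 : (0 : ℂ) ∈ ball (0 : ℂ) 1 := mem_ball_self one_pos
  have ha1 : ‖a‖ < 1 := by
    have := hmaps h0; rw [ha] at this; simpa [mem_ball_zero_iff] using this
  have hz1 : ‖z‖ < 1 := by simpa [mem_ball_zero_iff] using hz
  have hFlt : ∀ u ∈ ball (0 : ℂ) 1, ‖F u‖ < 1 := fun u hu =>
    mem_ball_zero_iff.mp (hmaps hu)
  set g : ℂ → ℂ := fun ζ => (F ζ - a) / (1 - (starRingEnd ℂ) a * F ζ) with hg
  have hgd : DifferentiableOn ℂ g (ball 0 1) := by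
    apply DifferentiableOn.div (hF.sub (differentiableOn_const a))
      ((differentiableOn_const 1).sub ((differentiableOn_const _).mul hF))
    exact fun ζ hζ => den_ne_zero ha1 (hFlt ζ hζ)
  have hnorm_lt : ∀ u : ℂ, ‖u‖ < 1 → ‖(u - a) / (1 - (starRingEnd ℂ) a * u)‖ < 1 := by
    intro u hu
    have hden := den_ne_zero ha1 hu
    have hdpos : 0 < ‖(1 : ℂ) - (starRingEnd ℂ) a * u‖ := norm_pos_iff.mpr hden
    rw [norm_div, div_lt_one hdpos]
    have hid := normSq_mobius_id a u
    have hpos : 0 < (1 - Complex.normSq a) * (1 - Complex.normSq u) := by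
      have h1 : Complex.normSq a < 1 := by
        have := ha1
        rw [← Complex.sq_norm]; nlinarith [norm_nonneg a]
      have h2 : Complex.normSq u < 1 := by
        have := hu
        rw [← Complex.sq_norm]; nlinarith [norm_nonneg u]
      nlinarith
    have hsq : Complex.normSq (u - a) < Complex.normSq (1 - (starRingEnd ℂ) a * u) := by
      nlinarith
    have e1 : ‖u - a‖ ^ 2 < ‖(1 : ℂ) - (starRingEnd ℂ) a * u‖ ^ 2 := by
      rwa [← Complex.sq_norm, ← Complex.sq_norm] at hsq
    nlinarith [norm_nonneg (u - a), hdpos]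
  have hgmaps : MapsTo g (ball (0 : ℂ) 1) (ball (0 : ℂ) 1) := by
    intro ζ hζ
    exact mem_ball_zero_iff.mpr (hnorm_lt (F ζ) (hFlt ζ hζ))
  have hg0 : g 0 = 0 := by simp [hg, ha]
  have hschwarz : ‖g z‖ ≤ ‖z‖ := by
    have := Complex.dist_le_dist_of_mapsTo_ball hgd (by rw [hg0]; exact hgmaps.mono_right ball_subset_closedBall) hz
    simpa [dist_zero_right, hg0] using this
  -- key Schwarz–Pick inequality
  have hdpos : 0 < ‖(1 : ℂ) - (starRingEnd ℂ) a * F z‖ :=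
    norm_pos_iff.mpr (den_ne_zero ha1 (hFlt z hz))
  have h1 : ‖F z - a‖ ≤ ‖z‖ * ‖(1 : ℂ) - (starRingEnd ℂ) a * F z‖ := by
    have : ‖F z - a‖ / ‖(1 : ℂ) - (starRingEnd ℂ) a * F z‖ ≤ ‖z‖ := by
      rw [← norm_div]; exact hschwarz
    exact (div_le_iff₀ hdpos).mp this
  have hw1 : ‖F z‖ < 1 := hFlt z hz
  clear hschwarz hg0 hgmaps hgd hnorm_lt hg g hmaps hF hFlt hdpos h0 hz
  -- algebra
  set w := F z with hwdef
  set r : ℝ := ‖z‖ with hr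
  have hra : r * ‖a‖ < 1 := by
    calc r * ‖a‖ ≤ r * 1 := mul_le_mul_of_nonneg_left ha1.le (norm_nonneg z)
      _ < 1 := by simpa using hz1
  have hD : 0 < 1 - r ^ 2 * ‖a‖ ^ 2 := by
    nlinarith [mul_nonneg (norm_nonneg z) (norm_nonneg a)]
  set D : ℝ := 1 - r ^ 2 * ‖a‖ ^ 2 with hDdef
  clear_value w r D
  rw [le_div_iff₀ hD]
  have hA : ‖a‖ ^ 2 = a.re ^ 2 + a.im ^ 2 := by
    rw [Complex.sq_norm, Complex.normSq_apply]; ring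
  have hD' : (1 : ℝ) - r ^ 2 * (a.re ^ 2 + a.im ^ 2) ≠ 0 := by
    rw [← hA, ← hDdef]; exact hD.ne'
  have h2 : ‖(1 : ℂ) - (starRingEnd ℂ) a * w‖ ^ 2 =
      (1 - (a.re * w.re + a.im * w.im)) ^ 2 + (a.re * w.im - a.im * w.re) ^ 2 := by
    rw [Complex.sq_norm, Complex.normSq_apply]
    simp [Complex.sub_re, Complex.sub_im, Complex.mul_re, Complex.mul_im,
      Complex.conj_re, Complex.conj_im]
    ring
  have h3 : ‖w - a‖ ^ 2 = (w.re - a.re) ^ 2 + (w.im - a.im) ^ 2 := by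
    rw [Complex.sq_norm, Complex.normSq_apply]
    simp [Complex.sub_re, Complex.sub_im]
    ring
  have h4 : ‖w - ((1 - r ^ 2) / D : ℝ) • a‖ ^ 2 =
      (w.re - (1 - r ^ 2) / D * a.re) ^ 2 + (w.im - (1 - r ^ 2) / D * a.im) ^ 2 := by
    rw [Complex.sq_norm, Complex.normSq_apply]
    simp only [Complex.sub_re, Complex.sub_im, Complex.smul_re, Complex.smul_im, smul_eq_mul]
    ring
  have key : (r * (1 - ‖a‖ ^ 2)) ^ 2 - (‖w - ((1 - r ^ 2) / D) • a‖ * D) ^ 2 =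
      D * (r ^ 2 * ‖(1 : ℂ) - (starRingEnd ℂ) a * w‖ ^ 2 - ‖w - a‖ ^ 2) := by
    rw [mul_pow ‖w - ((1 - r ^ 2) / D) • a‖ D 2, h4, h2, h3, hDdef, hA]
    field_simp
    ring
  have hrhs : 0 ≤ r ^ 2 * ‖(1 : ℂ) - (starRingEnd ℂ) a * w‖ ^ 2 - ‖w - a‖ ^ 2 := by
    nlinarith [h1, norm_nonneg (w - a), mul_nonneg (norm_nonneg z) (norm_nonneg ((1 : ℂ) - (starRingEnd ℂ) a * w))]
  have hXsq : (‖w - ((1 - r ^ 2) / D) • a‖ * D) ^ 2 ≤ (r * (1 - ‖a‖ ^ 2)) ^ 2 := by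
    linarith [key, mul_nonneg hD.le hrhs]
  have hr0 : 0 ≤ r := hr ▸ norm_nonneg z
  have hB0 : 0 ≤ r * (1 - ‖a‖ ^ 2) := by
    apply mul_nonneg hr0; nlinarith [norm_nonneg a]
  have hX0 : 0 ≤ ‖w - ((1 - r ^ 2) / D) • a‖ * D := mul_nonneg (norm_nonneg _) hD.le
  nlinarith [hXsq, hX0, hB0]
end

section
/- Let F : 𝔻 → 𝔻 be holomorphic with F(0) = 0 and F′(0) = α ∈ (0, 1]. If z₁, z₂ ∈ 𝔻 are two distinct points with F(z₁) = F(z₂) = w₀, then |w₀| ≤ max(|z₁|, |z₂|)². -/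
open Metric Set

noncomputable def mob (a z : ℂ) : ℂ := (z - a) / (1 - (starRingEnd ℂ) a * z)

lemma normSq_mob_key (a z : ℂ) :
    Complex.normSq (1 - (starRingEnd ℂ) a * z) - Complex.normSq (z - a)
      = (1 - Complex.normSq a) * (1 - Complex.normSq z) := by
  simp only [Complex.normSq_apply, Complex.sub_re, Complex.sub_im, Complex.one_re, Complex.one_im,
    Complex.mul_re, Complex.mul_im, Complex.conj_re, Complex.conj_im]
  ring

lemma mob_ne {a z : ℂ} (ha : ‖a‖ < 1) (hz : ‖z‖ < 1) :
    1 - (starRingEnd ℂ) a * z ≠ 0 := by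
  have h1 : ‖(starRingEnd ℂ) a * z‖ < 1 := by
    rw [norm_mul, RCLike.norm_conj]
    nlinarith [norm_nonneg a, norm_nonneg z]
  intro h
  have : (starRingEnd ℂ) a * z = 1 := by linear_combination -h
  rw [this, norm_one] at h1
  exact lt_irrefl _ h1

lemma mob_norm_lt {a z : ℂ} (ha : ‖a‖ < 1) (hz : ‖z‖ < 1) : ‖mob a z‖ < 1 := by
  have hne := mob_ne ha hz
  have hpos : 0 < ‖1 - (starRingEnd ℂ) a * z‖ := norm_pos_iff.mpr hne
  rw [mob, norm_div, div_lt_one hpos]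
  have key := normSq_mob_key a z
  have hsa : Complex.normSq a < 1 := by rw [Complex.normSq_eq_norm_sq]; nlinarith [norm_nonneg a]
  have hsz : Complex.normSq z < 1 := by rw [Complex.normSq_eq_norm_sq]; nlinarith [norm_nonneg z]
  have h2 : Complex.normSq (z - a) < Complex.normSq (1 - (starRingEnd ℂ) a * z) := by nlinarith
  rw [Complex.normSq_eq_norm_sq, Complex.normSq_eq_norm_sq] at h2
  exact lt_of_pow_lt_pow_left₀ 2 (norm_nonneg _) h2

lemma mob_maps {a : ℂ} (ha : ‖a‖ < 1) :
    MapsTo (mob a) (ball (0:ℂ) 1) (ball (0:ℂ) 1) := fun z hz =>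
  mem_ball_zero_iff.mpr (mob_norm_lt ha (mem_ball_zero_iff.mp hz))

lemma mob_diff {a : ℂ} (ha : ‖a‖ < 1) :
    DifferentiableOn ℂ (mob a) (ball (0:ℂ) 1) := by
  apply DifferentiableOn.div
  · exact (differentiable_id.sub_const a).differentiableOn
  · exact ((differentiable_const _).sub ((differentiable_const _).mul differentiable_id)).differentiableOn
  · exact fun z hz => mob_ne ha (mem_ball_zero_iff.mp hz)

lemma mob_self (a : ℂ) : mob a a = 0 := by simp [mob]

lemma mob_zero (a : ℂ) : mob a 0 = -a := by simp [mob]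

lemma mob_inv {a z : ℂ} (ha : ‖a‖ < 1) (hz : ‖z‖ < 1) : mob (-a) (mob a z) = z := by
  have h1 := mob_ne ha hz
  have hsa : Complex.normSq a < 1 := by rw [Complex.normSq_eq_norm_sq]; nlinarith [norm_nonneg a]
  have h2 : (1 : ℂ) - (starRingEnd ℂ) a * a ≠ 0 := by
    rw [mul_comm, Complex.mul_conj]
    intro h
    have h3 : ((1 - Complex.normSq a : ℝ) : ℂ) = 0 := by push_cast; linear_combination h
    rw [Complex.ofReal_eq_zero] at h3
    linarith
  have h2' : (1:ℂ) - a * (starRingEnd ℂ) a ≠ 0 := by rwa [mul_comm ((starRingEnd ℂ) a)] at h2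
  simp only [mob, map_neg, sub_neg_eq_add, mul_neg, neg_mul]
  field_simp [h2']
  have hden : 1 - (starRingEnd ℂ) a * z + (starRingEnd ℂ) a * (z - a) ≠ 0 := by
    have e : 1 - (starRingEnd ℂ) a * z + (starRingEnd ℂ) a * (z - a) = 1 - (starRingEnd ℂ) a * a := by
      ring
    rw [e]; exact h2
  have h1' : 1 - z * (starRingEnd ℂ) a ≠ 0 := by rwa [mul_comm] at h1
  have hden' : 1 - z * (starRingEnd ℂ) a + (z - a) * (starRingEnd ℂ) a ≠ 0 := by
    convert hden using 1; ring
  rw [div_add' _ _ _ h1', one_add_div h1', div_div_div_cancel_right₀ h1', div_eq_iff hden']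
  ring

lemma schwarz_closed {f : ℂ → ℂ} (hd : DifferentiableOn ℂ f (ball 0 1))
    (hm : MapsTo f (ball (0:ℂ) 1) (closedBall (0:ℂ) 1)) (h0 : f 0 = 0)
    {z : ℂ} (hz : z ∈ ball (0:ℂ) 1) : ‖f z‖ ≤ ‖z‖ := by
  have key : ∀ ε : ℝ, 0 < ε → ‖f z‖ ≤ (1 + ε) * ‖z‖ := fun ε hε => by
    have hm' : MapsTo f (ball (0:ℂ) 1) (closedBall (f 0) (1 + ε)) := fun x hx => by
      rw [h0, mem_closedBall_zero_iff]
      exact le_trans (mem_closedBall_zero_iff.mp (hm hx)) (by linarith)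
    have h := Complex.dist_le_div_mul_dist_of_mapsTo_ball hd hm' hz
    simpa [h0, dist_zero_right, div_one] using h
  refine le_of_forall_pos_le_add fun ε hε => ?_
  have h1 := key ε hε
  have h2 : ‖z‖ < 1 := mem_ball_zero_iff.mp hz
  nlinarith [norm_nonneg z]

theorem stmt_9 (F : ℂ → ℂ) (hF : DifferentiableOn ℂ F (ball 0 1))
    (hmaps : MapsTo F (ball (0 : ℂ) 1) (ball (0 : ℂ) 1))
    (α : ℝ) (hα0 : 0 < α) (hα1 : α ≤ 1)
    (h0 : F 0 = 0) (hd : deriv F 0 = (α : ℂ))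
    (z₁ z₂ : ℂ) (hz₁ : z₁ ∈ ball (0 : ℂ) 1) (hz₂ : z₂ ∈ ball (0 : ℂ) 1)
    (hne : z₁ ≠ z₂) (w₀ : ℂ) (hw₁ : F z₁ = w₀) (hw₂ : F z₂ = w₀) :
    ‖w₀‖ ≤ max ‖z₁‖ ‖z₂‖ ^ 2 := by
  by_cases hw0 : w₀ = 0
  · rw [hw0, norm_zero]; positivity
  have hz₁' : ‖z₁‖ < 1 := mem_ball_zero_iff.mp hz₁
  have hz₂' : ‖z₂‖ < 1 := mem_ball_zero_iff.mp hz₂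
  have hw₀ : ‖w₀‖ < 1 := mem_ball_zero_iff.mp (hw₁ ▸ hmaps hz₁)
  have hz₁0 : z₁ ≠ 0 := fun h => hw0 (by rw [← hw₁, h, h0])
  set g : ℂ → ℂ := fun z => mob w₀ (F z) with hg
  have hgdiff : DifferentiableOn ℂ g (ball 0 1) := (mob_diff hw₀).comp hF hmaps
  have hgmaps : MapsTo g (ball (0:ℂ) 1) (ball (0:ℂ) 1) := (mob_maps hw₀).comp hmaps
  have hg0 : g 0 = -w₀ := by show mob w₀ (F 0) = -w₀; rw [h0, mob_zero]
  have hg1 : g z₁ = 0 := by show mob w₀ (F z₁) = 0; rw [hw₁, mob_self]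
  have hg2 : g z₂ = 0 := by show mob w₀ (F z₂) = 0; rw [hw₂, mob_self]
  have hnz₁' : ‖(-z₁ : ℂ)‖ < 1 := by rwa [norm_neg]
  set H : ℂ → ℂ := fun z => g (mob (-z₁) z) with hH
  have hHdiff : DifferentiableOn ℂ H (ball 0 1) := hgdiff.comp (mob_diff hnz₁') (mob_maps hnz₁')
  have hHmaps : MapsTo H (ball (0:ℂ) 1) (ball (0:ℂ) 1) := hgmaps.comp (mob_maps hnz₁')
  have hH0 : H 0 = 0 := by show g (mob (-z₁) 0) = 0; rw [mob_zero, neg_neg, hg1]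
  set b : ℂ := mob z₁ z₂ with hbdef
  have hb' : ‖b‖ < 1 := mob_norm_lt hz₁' hz₂'
  have hinvb : mob (-z₁) b = z₂ := mob_inv hz₁' hz₂'
  have hb0 : b ≠ 0 := by
    intro h
    apply hne
    have h2 := hinvb
    rw [h, mob_zero, neg_neg] at h2
    exact h2
  have hHb : H b = 0 := by show g (mob (-z₁) b) = 0; rw [hinvb, hg2]
  set K : ℂ → ℂ := dslope H 0 with hK
  have hKdiff : DifferentiableOn ℂ K (ball 0 1) :=
    (Complex.differentiableOn_dslope (isOpen_ball.mem_nhds (mem_ball_self one_pos))).mpr hHdiff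
  have hKbound : ∀ x ∈ ball (0:ℂ) 1, ‖K x‖ ≤ 1 := fun x hx => by
    have h := Complex.norm_dslope_le_div_of_mapsTo_ball hHdiff (by rw [hH0]; exact hHmaps.mono_right ball_subset_closedBall) hx
    simpa using h
  have hKb : K b = 0 := by
    rw [hK, dslope_of_ne _ hb0, slope_def_field, hHb, hH0, sub_zero, sub_zero, zero_div]
  have hnb' : ‖(-b : ℂ)‖ < 1 := by rwa [norm_neg]
  set L : ℂ → ℂ := fun z => K (mob (-b) z) with hL
  have hLdiff : DifferentiableOn ℂ L (ball 0 1) := hKdiff.comp (mob_diff hnb') (mob_maps hnb')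
  have hLmaps : MapsTo L (ball (0:ℂ) 1) (closedBall (0:ℂ) 1) := fun x hx =>
    mem_closedBall_zero_iff.mpr (hKbound _ (mob_maps hnb' hx))
  have hL0 : L 0 = 0 := by show K (mob (-b) 0) = 0; rw [mob_zero, neg_neg, hKb]
  set p : ℂ := mob b (-z₁) with hpdef
  have hp' : ‖p‖ < 1 := mob_norm_lt hb' hnz₁'
  have hpmem : p ∈ ball (0:ℂ) 1 := mem_ball_zero_iff.mpr hp'
  have hinvp : mob (-b) p = -z₁ := mob_inv hb' hnz₁'
  have hKnz₁ : ‖K (-z₁)‖ ≤ ‖p‖ := by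
    have h := schwarz_closed hLdiff hLmaps hL0 hpmem
    have hLp : L p = K (-z₁) := by show K (mob (-b) p) = K (-z₁); rw [hinvp]
    rwa [hLp] at h
  -- compute ‖p‖ = ‖z₂‖
  have hd1 : (1:ℂ) - (starRingEnd ℂ) z₁ * z₂ ≠ 0 := mob_ne hz₁' hz₂'
  have hb_eq : b * (1 - (starRingEnd ℂ) z₁ * z₂) = z₂ - z₁ := by
    rw [hbdef, mob, div_mul_cancel₀ _ hd1]
  have hcb_eq : (starRingEnd ℂ) b * (1 - z₁ * (starRingEnd ℂ) z₂)
      = (starRingEnd ℂ) z₂ - (starRingEnd ℂ) z₁ := by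
    have h := congrArg (starRingEnd ℂ) hb_eq
    simpa [map_mul, map_sub, map_one, Complex.conj_conj] using h
  have hden2 : (1 : ℂ) - (starRingEnd ℂ) b * (-z₁) ≠ 0 := mob_ne hb' hnz₁'
  have hp_eq : p * (1 - (starRingEnd ℂ) b * (-z₁)) = -z₁ - b := by
    rw [hpdef, mob, div_mul_cancel₀ _ hden2]
  have hnum : (-z₁ - b) * (1 - (starRingEnd ℂ) z₁ * z₂) = -z₂ * (1 - z₁ * (starRingEnd ℂ) z₁) := by
    linear_combination -hb_eq
  have hden : (1 - (starRingEnd ℂ) b * (-z₁)) * (1 - z₁ * (starRingEnd ℂ) z₂)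
      = 1 - z₁ * (starRingEnd ℂ) z₁ := by
    linear_combination z₁ * hcb_eq
  have hcc' : ‖(1:ℂ) - (starRingEnd ℂ) z₁ * z₂‖ = ‖(1:ℂ) - z₁ * (starRingEnd ℂ) z₂‖ := by
    rw [← RCLike.norm_conj ((1:ℂ) - (starRingEnd ℂ) z₁ * z₂)]
    congr 1
    simp [map_sub, map_mul, Complex.conj_conj]
  have e1 := congrArg norm hp_eq
  rw [norm_mul] at e1
  have e2 := congrArg norm hnum
  rw [norm_mul, norm_mul, norm_neg] at e2
  have e3 := congrArg norm hden
  rw [norm_mul] at e3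
  have hA : (0:ℝ) < ‖(1:ℂ) - (starRingEnd ℂ) b * (-z₁)‖ := norm_pos_iff.mpr hden2
  have hcpos : (0:ℝ) < ‖(1:ℂ) - (starRingEnd ℂ) z₁ * z₂‖ := norm_pos_iff.mpr hd1
  have hp_norm : ‖p‖ = ‖z₂‖ := by
    have hAc : ‖(1:ℂ) - (starRingEnd ℂ) b * (-z₁)‖ * ‖(1:ℂ) - (starRingEnd ℂ) z₁ * z₂‖ ≠ 0 :=
      mul_ne_zero (ne_of_gt hA) (ne_of_gt hcpos)
    apply mul_right_cancel₀ hAc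
    calc ‖p‖ * (‖(1:ℂ) - (starRingEnd ℂ) b * (-z₁)‖ * ‖(1:ℂ) - (starRingEnd ℂ) z₁ * z₂‖)
        = (‖p‖ * ‖(1:ℂ) - (starRingEnd ℂ) b * (-z₁)‖) * ‖(1:ℂ) - (starRingEnd ℂ) z₁ * z₂‖ := by
          ring
      _ = ‖-z₁ - b‖ * ‖(1:ℂ) - (starRingEnd ℂ) z₁ * z₂‖ := by rw [e1]
      _ = ‖z₂‖ * ‖(1:ℂ) - z₁ * (starRingEnd ℂ) z₁‖ := e2
      _ = ‖z₂‖ * (‖(1:ℂ) - (starRingEnd ℂ) b * (-z₁)‖ * ‖(1:ℂ) - z₁ * (starRingEnd ℂ) z₂‖) := by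
          rw [← e3]
      _ = ‖z₂‖ * (‖(1:ℂ) - (starRingEnd ℂ) b * (-z₁)‖ * ‖(1:ℂ) - (starRingEnd ℂ) z₁ * z₂‖) := by
          rw [hcc']
  -- final assembly
  have hHnz₁ : H (-z₁) = -w₀ := by show g (mob (-z₁) (-z₁)) = -w₀; rw [mob_self, hg0]
  have hnz₁0 : (-z₁ : ℂ) ≠ 0 := neg_ne_zero.mpr hz₁0
  have hfact : K (-z₁) * (-z₁) = H (-z₁) := by
    rw [hK, dslope_of_ne _ hnz₁0, slope_def_field, hH0, sub_zero, sub_zero,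
      div_mul_cancel₀ _ hnz₁0]
  have hw_eq : ‖w₀‖ = ‖K (-z₁)‖ * ‖z₁‖ := by
    have h := congrArg norm hfact
    rw [hHnz₁, norm_neg, norm_mul, norm_neg] at h
    exact h.symm
  have hstep : ‖K (-z₁)‖ ≤ ‖z₂‖ := hp_norm ▸ hKnz₁
  calc ‖w₀‖ = ‖K (-z₁)‖ * ‖z₁‖ := hw_eq
    _ ≤ ‖z₂‖ * ‖z₁‖ := mul_le_mul_of_nonneg_right hstep (norm_nonneg _)
    _ ≤ max ‖z₁‖ ‖z₂‖ * max ‖z₁‖ ‖z₂‖ :=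
        mul_le_mul (le_max_right _ _) (le_max_left _ _) (norm_nonneg _)
          (le_trans (norm_nonneg _) (le_max_right _ _))
    _ = max ‖z₁‖ ‖z₂‖ ^ 2 := (sq _).symm
end

section
/- Let F : 𝔻 → 𝔻 be holomorphic with F(0) = 0 and F′(0) = α ∈ (0, 1). Set r₀ = α/(1 + √(1 − α²)). Then for every r with 0 < r ≤ r₀, the image F(B(0, r)) contains the open disc B(0, R(r)), where R(r) = r·(α − r)/(1 − α·r); moreover R(r) ≥ r·r₀. -/
open Metric Set
set_option maxHeartbeats 1000000

/-- Pointwise lower bound: `|F z| ≥ |z| (α - |z|)/(1 - α |z|)` on the unit disc. -/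
lemma landau_lb (F : ℂ → ℂ) (hF : DifferentiableOn ℂ F (ball 0 1))
    (hmaps : MapsTo F (ball (0 : ℂ) 1) (ball (0 : ℂ) 1))
    (α : ℝ) (hα0 : 0 < α) (hα1 : α < 1)
    (h0 : F 0 = 0) (hd : deriv F 0 = (α : ℂ)) :
    ∀ z ∈ ball (0 : ℂ) 1,
      ‖z‖ * (α - ‖z‖) / (1 - α * ‖z‖) ≤ ‖F z‖ := by
  set g : ℂ → ℂ := dslope F 0 with hgdef
  have hg_diff : DifferentiableOn ℂ g (ball 0 1) :=
    (Complex.differentiableOn_dslope (isOpen_ball.mem_nhds (mem_ball_self one_pos))).mpr hF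
  have hg0 : g 0 = (α : ℂ) := by rw [hgdef, dslope_same, hd]
  have hgz : ∀ z : ℂ, z ≠ 0 → g z = F z / z := by
    intro z hz
    rw [hgdef, dslope_of_ne _ hz, slope_def_field]
    field_simp [h0]
    simp [h0]
  have hg_le : ∀ z ∈ ball (0 : ℂ) 1, ‖g z‖ ≤ 1 := by
    intro z hz
    rcases eq_or_ne z 0 with rfl | hz0
    · rw [hg0, Complex.norm_real, Real.norm_eq_abs, abs_of_pos hα0]; exact hα1.le
    · rw [hgz z hz0, norm_div]
      rw [div_le_one (by simpa [norm_pos_iff] using hz0)]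
      exact Complex.norm_le_norm_of_mapsTo_ball hF (hmaps.mono_right ball_subset_closedBall) h0 (mem_ball_zero_iff.mp hz)
  have hg_lt : ∀ z ∈ ball (0 : ℂ) 1, ‖g z‖ < 1 := by
    intro z hz
    rcases lt_or_ge (‖g z‖) 1 with h | h
    · exact h
    exfalso
    have heq : ‖g z‖ = 1 := le_antisymm (hg_le z hz) h
    have hmax : IsMaxOn (norm ∘ g) (ball (0 : ℂ) 1) z := by
      intro w hw
      simp only [Function.comp_apply, heq]
      exact hg_le w hw
    have hconst := Complex.eqOn_of_isPreconnected_of_isMaxOn_norm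
      (convex_ball (0:ℂ) 1).isPreconnected isOpen_ball hg_diff hz hmax
    have h00 : g 0 = g z := hconst (mem_ball_self one_pos)
    rw [hg0] at h00
    have : ‖(α : ℂ)‖ = 1 := by rw [h00, heq]
    rw [Complex.norm_real, Real.norm_eq_abs, abs_of_pos hα0] at this
    linarith
  -- define the auxiliary map h
  set h : ℂ → ℂ := fun w => (g w - α) / (1 - α * g w) with hhdef
  have hden : ∀ w ∈ ball (0 : ℂ) 1, (1 : ℂ) - α * g w ≠ 0 := by
    intro w hw hc
    have h1 : (α : ℂ) * g w = 1 := by linear_combination -hc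
    have h2 : ‖(α : ℂ) * g w‖ = 1 := by rw [h1, norm_one]
    rw [norm_mul, Complex.norm_real, Real.norm_eq_abs, abs_of_pos hα0] at h2
    nlinarith [hg_lt w hw, norm_nonneg (g w)]
  have hh_diff : DifferentiableOn ℂ h (ball 0 1) :=
    (hg_diff.sub_const _).div ((differentiableOn_const _).sub (hg_diff.const_mul _)) hden
  have hh0 : h 0 = 0 := by
    simp [hhdef, hg0]
  have hh_maps : MapsTo h (ball (0 : ℂ) 1) (ball (0 : ℂ) 1) := by
    intro w hw
    rw [mem_ball_zero_iff, hhdef]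
    have hdw := hden w hw
    rw [norm_div, div_lt_one (by simpa [norm_pos_iff] using hdw)]
    have hx : (g w).re ^ 2 + (g w).im ^ 2 < 1 := by
      have := hg_lt w hw
      have h2 : ‖g w‖ ^ 2 < 1 := by nlinarith [norm_nonneg (g w)]
      rw [Complex.sq_norm, Complex.normSq_apply] at h2
      nlinarith
    have e1 : ‖g w - (α : ℂ)‖ ^ 2 = ((g w).re - α) ^ 2 + (g w).im ^ 2 := by
      rw [Complex.sq_norm, Complex.normSq_apply]
      simp [Complex.sub_re, Complex.sub_im]
      ring
    have e2 : ‖1 - (α : ℂ) * g w‖ ^ 2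
        = (1 - α * (g w).re) ^ 2 + (α * (g w).im) ^ 2 := by
      rw [Complex.sq_norm, Complex.normSq_apply]
      simp [Complex.sub_re, Complex.sub_im, Complex.mul_re, Complex.mul_im]
      ring
    have hsq : ‖g w - (α : ℂ)‖ ^ 2 < ‖1 - (α : ℂ) * g w‖ ^ 2 := by
      rw [e1, e2]
      nlinarith [mul_pos (show (0:ℝ) < 1 - α ^ 2 by nlinarith)
        (show (0:ℝ) < 1 - ((g w).re ^ 2 + (g w).im ^ 2) by nlinarith)]
    exact lt_of_pow_lt_pow_left₀ 2 (norm_nonneg _) hsq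
  have hSch : ∀ w ∈ ball (0 : ℂ) 1, ‖h w‖ ≤ ‖w‖ := fun w hw =>
    Complex.norm_le_norm_of_mapsTo_ball hh_diff (hh_maps.mono_right ball_subset_closedBall) hh0 (mem_ball_zero_iff.mp hw)
  -- now the main bound
  intro z hz
  set t : ℝ := ‖z‖ with htdef
  have ht0 : 0 ≤ t := norm_nonneg z
  have ht1 : t < 1 := mem_ball_zero_iff.mp hz
  have hαt : α * t < 1 := by nlinarith
  rcases le_or_gt α t with hcase | hcase
  · -- trivial case: numerator nonpositive
    have : t * (α - t) / (1 - α * t) ≤ 0 :=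
      div_nonpos_iff.mpr (Or.inr ⟨by nlinarith, by linarith⟩)
    exact this.trans (norm_nonneg _)
  rcases eq_or_ne z 0 with rfl | hz0
  · simp [htdef]
  -- nontrivial case
  have ht0' : 0 < t := by simpa [htdef, norm_pos_iff] using hz0
  -- recover g from h
  have hrel : h z * (1 - α * g z) = g z - α := div_mul_cancel₀ _ (hden z hz)
  have ginv : g z * (1 + α * h z) = h z + α := by linear_combination -hrel
  have hc : ‖h z‖ ≤ t := hSch z hz
  have hden2 : (1 : ℂ) + (α : ℂ) * h z ≠ 0 := by
    intro hcon
    have h1 : (α : ℂ) * h z = -1 := by linear_combination hcon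
    have h2 : ‖(α : ℂ) * h z‖ = 1 := by rw [h1]; simp
    rw [norm_mul, Complex.norm_real, Real.norm_eq_abs, abs_of_pos hα0] at h2
    nlinarith
  have habs : ‖g z‖ = ‖h z + α‖ / ‖1 + (α : ℂ) * h z‖ := by
    rw [eq_div_iff (by simpa [norm_pos_iff] using hden2)]
    rw [← norm_mul, ginv]
  -- key inequality
  have hkey : (α - t) / (1 - α * t) ≤ ‖g z‖ := by
    rw [habs, div_le_div_iff₀ (by linarith) (by simpa [norm_pos_iff] using hden2)]
    set x : ℝ := (h z).re
    set y : ℝ := (h z).im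
    have hxy : x ^ 2 + y ^ 2 ≤ t ^ 2 := by
      have h2 : ‖h z‖ ^ 2 ≤ t ^ 2 := by nlinarith [norm_nonneg (h z)]
      rw [Complex.sq_norm, Complex.normSq_apply] at h2
      nlinarith
    have hxt : -t ≤ x := by nlinarith [sq_nonneg y, sq_nonneg (x + t), sq_nonneg (x - t)]
    have e1 : ‖h z + (α : ℂ)‖ ^ 2 = (x + α) ^ 2 + y ^ 2 := by
      rw [Complex.sq_norm, Complex.normSq_apply]
      simp [Complex.add_re, Complex.add_im]
      ring
    have e2 : ‖1 + (α : ℂ) * h z‖ ^ 2 = (1 + α * x) ^ 2 + (α * y) ^ 2 := by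
      rw [Complex.sq_norm, Complex.normSq_apply]
      simp [Complex.add_re, Complex.add_im, Complex.mul_re, Complex.mul_im]
      ring
    have hA : (0:ℝ) ≤ 1 + α ^ 2 - 2 * α * t := by nlinarith
    have hfac : (0:ℝ) ≤ (1 + α ^ 2 - 2 * α * t) * x + 2 * α - t * (1 + α ^ 2) := by
      nlinarith [mul_nonneg hA (by linarith : (0:ℝ) ≤ x + t)]
    have hsq : ((α - t) * ‖1 + (α : ℂ) * h z‖) ^ 2
        ≤ (‖h z + (α : ℂ)‖ * (1 - α * t)) ^ 2 := by
      rw [mul_pow, mul_pow, e1, e2]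
      nlinarith [mul_nonneg (mul_nonneg (sq_nonneg y) hA) (by nlinarith : (0:ℝ) ≤ 1 - α ^ 2),
        mul_nonneg (mul_nonneg (by linarith : (0:ℝ) ≤ x + t) hfac)
          (by nlinarith : (0:ℝ) ≤ 1 - α ^ 2)]
    have hL : 0 ≤ (α - t) * ‖1 + (α : ℂ) * h z‖ :=
      mul_nonneg (by linarith) (norm_nonneg _)
    have hR : 0 ≤ ‖h z + (α : ℂ)‖ * (1 - α * t) :=
      mul_nonneg (norm_nonneg _) (by linarith)
    nlinarith [hsq, hL, hR]
  -- conclude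
  have hFz : ‖F z‖ = ‖g z‖ * t := by
    rw [hgz z hz0, norm_div, ← htdef, div_mul_cancel₀]
    exact ne_of_gt ht0'
  rw [hFz, mul_div_assoc, mul_comm (‖g z‖) t]
  exact mul_le_mul_of_nonneg_left hkey ht0

theorem stmt_11 (F : ℂ → ℂ) (hF : DifferentiableOn ℂ F (ball 0 1))
    (hmaps : MapsTo F (ball (0 : ℂ) 1) (ball (0 : ℂ) 1))
    (α : ℝ) (hα0 : 0 < α) (hα1 : α < 1)
    (h0 : F 0 = 0) (hd : deriv F 0 = (α : ℂ)) :
    ∀ r : ℝ, 0 < r → r ≤ α / (1 + Real.sqrt (1 - α ^ 2)) →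
      ball (0 : ℂ) (r * (α - r) / (1 - α * r)) ⊆ F '' ball 0 r ∧
        r * (α / (1 + Real.sqrt (1 - α ^ 2))) ≤ r * (α - r) / (1 - α * r) := by
  intro r hr hrr0
  set s : ℝ := Real.sqrt (1 - α ^ 2) with hsdef
  have h1α : (0:ℝ) < 1 - α ^ 2 := by nlinarith
  have hs0 : 0 < s := Real.sqrt_pos.mpr h1α
  have hs2 : s ^ 2 = 1 - α ^ 2 := Real.sq_sqrt h1α.le
  have hr₀α : α / (1 + s) < α := by
    rw [div_lt_iff₀ (by linarith)]; nlinarith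
  have hrα : r < α := lt_of_le_of_lt hrr0 hr₀α
  have hr1 : r < 1 := hrα.trans hα1
  have hαr : α * r < 1 := by nlinarith
  set R : ℝ := r * (α - r) / (1 - α * r) with hRdef
  have hR0 : 0 < R := div_pos (mul_pos hr (by linarith)) (by linarith)
  constructor
  · -- covering part
    have hball1 : ball (0:ℂ) r ⊆ ball 0 1 := ball_subset_ball (by linarith)
    have hcball : closedBall (0:ℂ) r ⊆ ball 0 1 := closedBall_subset_ball hr1
    have hopen : IsOpen (F '' ball (0:ℂ) r) := by
      have han : AnalyticOnNhd ℂ F (ball (0:ℂ) 1) := hF.analyticOnNhd isOpen_ball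
      rcases han.is_constant_or_isOpen (convex_ball (0:ℂ) 1).isPreconnected with ⟨w, hw⟩ | hop
      · exfalso
        have hev : F =ᶠ[nhds (0:ℂ)] fun _ => w := by
          filter_upwards [isOpen_ball.mem_nhds (mem_ball_self one_pos)] with x hx
          exact hw x hx
        have : deriv F 0 = 0 := by rw [hev.deriv_eq, deriv_const]
        rw [hd] at this
        exact hα0.ne' (by exact_mod_cast this)
      · exact hop _ hball1 isOpen_ball
    have hlb := landau_lb F hF hmaps α hα0 hα1 h0 hd
    have hccont : ContinuousOn F (closedBall (0:ℂ) r) := hF.continuousOn.mono hcball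
    have hcomp : IsCompact (F '' closedBall (0:ℂ) r) :=
      (isCompact_closedBall _ _).image_of_continuousOn hccont
    have hclosure : closure (F '' ball (0:ℂ) r) ⊆ F '' closedBall (0:ℂ) r :=
      closure_minimal (image_mono ball_subset_closedBall) hcomp.isClosed
    have hclos : ball (0:ℂ) R ∩ closure (F '' ball (0:ℂ) r) ⊆ F '' ball (0:ℂ) r := by
      rintro w ⟨hwR, hwc⟩
      obtain ⟨z, hz, rfl⟩ := hclosure hwc
      have hz1 : z ∈ ball (0:ℂ) 1 := hcball hz
      have hlbz := hlb z hz1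
      have htr : ‖z‖ ≤ r := mem_closedBall_zero_iff.mp hz
      refine ⟨z, ?_, rfl⟩
      rw [mem_ball_zero_iff]
      rcases lt_or_eq_of_le htr with h | h
      · exact h
      exfalso
      rw [h] at hlbz
      have hwR' : ‖F z‖ < R := mem_ball_zero_iff.mp hwR
      rw [hRdef] at hwR'
      linarith
    have hpc : IsPreconnected (ball (0:ℂ) R) := (convex_ball (0:ℂ) R).isPreconnected
    have hv : IsOpen (closure (F '' ball (0:ℂ) r))ᶜ := isClosed_closure.isOpen_compl
    have hdisj : Disjoint (F '' ball (0:ℂ) r) (closure (F '' ball (0:ℂ) r))ᶜ :=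
      Set.disjoint_left.mpr fun x hx hx' => hx' (subset_closure hx)
    have hsub : ball (0:ℂ) R ⊆ F '' ball (0:ℂ) r ∪ (closure (F '' ball (0:ℂ) r))ᶜ := by
      intro w hw
      by_cases hwc : w ∈ closure (F '' ball (0:ℂ) r)
      · exact Or.inl (hclos ⟨hw, hwc⟩)
      · exact Or.inr hwc
    have hne : (ball (0:ℂ) R ∩ F '' ball (0:ℂ) r).Nonempty :=
      ⟨0, mem_ball_self hR0, ⟨0, mem_ball_self hr, h0⟩⟩
    exact hpc.subset_left_of_subset_union hopen hv hdisj hsub hne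
  · -- numeric part
    have h1 : r * (1 + s) ≤ α := (le_div_iff₀ (by linarith)).mp hrr0
    have hkey : α / (1 + s) ≤ (α - r) / (1 - α * r) := by
      rw [div_le_div_iff₀ (by linarith) (by linarith)]
      nlinarith [mul_nonneg hs0.le (by linarith : (0:ℝ) ≤ α - r * (1 + s))]
    calc r * (α / (1 + s)) ≤ r * ((α - r) / (1 - α * r)) :=
          mul_le_mul_of_nonneg_left hkey hr.le
      _ = r * (α - r) / (1 - α * r) := by ring
end

section
/- Let f be a slice regular function on the open quaternionic unit ball 𝔹 given by a power series f(q) = Σ qⁿ aₙ with quaternion coefficients aₙ, converging on 𝔹, with f(0) = 0 and |f′(q)| ≤ 1/(1 − |q|²) for all q ∈ 𝔹, where f′(q) = Σ qⁿ⁻¹ n aₙ. Then for all q ∈ 𝔹, |f(q)| ≤ (1/2)·log((1 + |q|)/(1 − |q|)). -/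
open Metric Set

set_option maxHeartbeats 1000000 in
theorem stmt_16 (f f' : Quaternion ℝ → Quaternion ℝ) (a : ℕ → Quaternion ℝ)
    (hf : ∀ q : Quaternion ℝ, ‖q‖ < 1 → HasSum (fun n => q ^ n * a n) (f q))
    (hf' : ∀ q : Quaternion ℝ, ‖q‖ < 1 →
      HasSum (fun n => q ^ n * (((n + 1 : ℕ) : ℝ) • a (n + 1))) (f' q))
    (h0 : f 0 = 0)
    (hbd : ∀ q : Quaternion ℝ, ‖q‖ < 1 → ‖f' q‖ ≤ 1 / (1 - ‖q‖ ^ 2)) :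
    ∀ q : Quaternion ℝ, ‖q‖ < 1 →
      ‖f q‖ ≤ (1 / 2) * Real.log ((1 + ‖q‖) / (1 - ‖q‖)) := by
  intro q hq
  by_cases hq0 : q = 0
  · subst hq0
    simp [h0, Real.log_one]
  set s := ‖q‖ with hs_def
  have hs0 : 0 < s := norm_pos_iff.mpr hq0
  have hs1 : s < 1 := hq
  set σ : ℝ := (1 + s) / 2 with hσ_def
  have hsσ : s < σ := by rw [hσ_def]; linarith
  have hσ1 : σ < 1 := by rw [hσ_def]; linarith
  have hσ0 : 0 < σ := lt_trans hs0 hsσ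
  set r : ℝ := (1 + σ) / 2 with hr_def
  have hσr : σ < r := by rw [hr_def]; linarith
  have hr1 : r < 1 := by rw [hr_def]; linarith
  have hr0 : 0 < r := lt_trans hσ0 hσr
  set R : ℝ := σ / s with hR_def
  have hR1 : 1 < R := (one_lt_div hs0).mpr hsσ
  have hR0 : 0 < R := lt_trans one_pos hR1
  have hRs : R * s = σ := div_mul_cancel₀ _ hs0.ne'
  set ρ : ℝ := σ / r with hρ_def
  have hρ0 : 0 < ρ := div_pos hσ0 hr0
  have hρ1 : ρ < 1 := (div_lt_one hr0).mpr hσr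
  -- coefficient bound
  have hsum_r : Summable (fun n => ((r : ℝ) : Quaternion ℝ) ^ n * a n) := by
    refine (hf ((r : ℝ) : Quaternion ℝ) ?_).summable
    rw [Quaternion.norm_coe, Real.norm_eq_abs, abs_of_pos hr0]; exact hr1
  have htend : Filter.Tendsto (fun n => ‖a n‖ * r ^ n) Filter.atTop (nhds 0) := by
    have h := hsum_r.tendsto_atTop_zero.norm
    simp only [norm_mul, norm_pow, Quaternion.norm_coe, Real.norm_eq_abs, abs_of_pos hr0,
      norm_zero] at h
    simpa [mul_comm] using h
  obtain ⟨C, hC⟩ : ∃ C, ∀ n, ‖a n‖ * r ^ n ≤ C := by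
    obtain ⟨C, hC⟩ := htend.bddAbove_range
    exact ⟨C, fun n => hC ⟨n, rfl⟩⟩
  have hC0 : 0 ≤ C := le_trans (by positivity) (hC 0)
  -- the summable bound
  set u : ℕ → ℝ := fun n => (C * s / σ) * ((n : ℝ) * ρ ^ n) with hu_def
  have hu : Summable u := by
    have h := (summable_pow_mul_geometric_of_norm_lt_one 1
      (by rw [Real.norm_eq_abs, abs_of_pos hρ0]; exact hρ1) : Summable fun n : ℕ => (n : ℝ) ^ 1 * ρ ^ n)
    simpa [pow_one] using h.mul_left (C * s / σ)
  have key : ∀ (n : ℕ) (t : ℝ), |t| ≤ R →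
      (n : ℝ) * |t| ^ (n - 1) * (s ^ n * ‖a n‖) ≤ u n := by
    intro n t ht
    match n with
    | 0 => simp [hu_def]
    | (m + 1) =>
      have ha : ‖a (m + 1)‖ ≤ C / r ^ (m + 1) :=
        (le_div_iff₀ (by positivity)).mpr (hC (m + 1))
      calc ((m + 1 : ℕ) : ℝ) * |t| ^ (m + 1 - 1) * (s ^ (m + 1) * ‖a (m + 1)‖)
          ≤ ((m + 1 : ℕ) : ℝ) * R ^ m * (s ^ (m + 1) * (C / r ^ (m + 1))) := by
            have h1 : |t| ^ (m + 1 - 1) ≤ R ^ m := by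
              simpa using pow_le_pow_left₀ (abs_nonneg t) ht m
            have h2 : ((m + 1 : ℕ) : ℝ) ≥ 0 := by positivity
            gcongr
        _ = u (m + 1) := by
            rw [hu_def, hR_def, hρ_def]
            have hs' : s ≠ 0 := hs0.ne'
            have hr' : r ≠ 0 := hr0.ne'
            have hσ' : σ ≠ 0 := hσ0.ne'
            simp only [div_pow]
            field_simp
            ring
  -- setup
  set b : ℕ → Quaternion ℝ := fun n => q ^ n * a n with hb_def
  set g : ℕ → ℝ → Quaternion ℝ := fun n t => t ^ n • b n with hg_def
  set g' : ℕ → ℝ → Quaternion ℝ := fun n t => ((n : ℝ) * t ^ (n - 1)) • b n with hg'_def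
  have hgderiv : ∀ (n : ℕ) (t : ℝ), t ∈ Ioo (-R) R → HasDerivAt (g n) (g' n t) t :=
    fun n t _ => (hasDerivAt_pow n t).smul_const (b n)
  have hg'bound : ∀ (n : ℕ) (t : ℝ), t ∈ Ioo (-R) R → ‖g' n t‖ ≤ u n := by
    intro n t ht
    have habs : |t| ≤ R := (abs_lt.mpr ⟨ht.1, ht.2⟩).le
    have : ‖g' n t‖ = (n : ℝ) * |t| ^ (n - 1) * (s ^ n * ‖a n‖) := by
      rw [hg'_def]
      simp only [norm_smul, Real.norm_eq_abs, abs_mul, abs_pow, Nat.abs_cast, hb_def,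
        norm_mul, norm_pow]
      rfl
    rw [this]
    exact key n t habs
  have hnormIoo : ∀ t : ℝ, t ∈ Ioo (-R) R → ‖t • q‖ < 1 := by
    intro t ht
    rw [norm_smul, Real.norm_eq_abs]
    calc |t| * s < R * s := mul_lt_mul_of_pos_right (abs_lt.mpr ⟨ht.1, ht.2⟩) hs0
      _ = σ := hRs
      _ < 1 := hσ1
  have hsum_at : ∀ t : ℝ, t ∈ Ioo (-R) R → HasSum (fun n => g n t) (f (t • q)) := by
    intro t ht
    have h := hf (t • q) (hnormIoo t ht)
    simpa only [hg_def, hb_def, smul_pow, smul_mul_assoc] using h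
  have hzero : (0 : ℝ) ∈ Ioo (-R) R := ⟨by linarith, hR0⟩
  have hIcc_sub : Icc (0 : ℝ) 1 ⊆ Ioo (-R) R := fun t ht =>
    ⟨by linarith [ht.1], by linarith [ht.2]⟩
  have hF : ∀ t ∈ Ioo (-R) R, HasDerivAt (fun z => ∑' n, g n z) (∑' n, g' n t) t :=
    fun t ht => hasDerivAt_tsum_of_isPreconnected hu isOpen_Ioo (convex_Ioo _ _).isPreconnected
      hgderiv hg'bound hzero (hsum_at 0 hzero).summable ht
  have hFval : ∀ t ∈ Ioo (-R) R, (∑' n, g n t) = f (t • q) := fun t ht => (hsum_at t ht).tsum_eq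
  -- identify the derivative
  have hderiv_id : ∀ t : ℝ, t ∈ Ioo (-R) R → (∑' n, g' n t) = q * f' (t • q) := by
    intro t ht
    have h1 := (hf' (t • q) (hnormIoo t ht)).mul_left q
    have h2 : ∀ n : ℕ, q * ((t • q) ^ n * (((n + 1 : ℕ) : ℝ) • a (n + 1))) = g' (n + 1) t := by
      intro n
      simp only [hg'_def, hb_def, Nat.add_sub_cancel, smul_pow, smul_mul_assoc, mul_smul_comm,
        smul_smul]
      rw [← mul_assoc, ← pow_succ']
    rw [funext h2] at h1
    have h3 : HasSum (fun n => g' n t) (q * f' (t • q) + ∑ i ∈ Finset.range 1, g' i t) :=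
      (hasSum_nat_add_iff 1).mp h1
    have h4 : g' 0 t = 0 := by simp [hg'_def]
    simp only [Finset.range_one, Finset.sum_singleton, h4, add_zero] at h3
    exact h3.tsum_eq
  have hF' : ∀ t ∈ Ioo (-R) R, HasDerivAt (fun z => ∑' n, g n z) (q * f' (t • q)) t :=
    fun t ht => hderiv_id t ht ▸ hF t ht
  -- the barrier
  set B : ℝ → ℝ := fun t => (1 / 2) * (Real.log (1 + t * s) - Real.log (1 - t * s)) with hB_def
  set B' : ℝ → ℝ := fun t => (1 / 2) * (s / (1 + t * s) + s / (1 - t * s)) with hB'_def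
  have hBderiv : ∀ t ∈ Icc (0 : ℝ) 1, HasDerivAt B (B' t) t := by
    intro t ht
    have h1 : (0 : ℝ) < 1 + t * s := by nlinarith [ht.1, ht.2]
    have h2 : (0 : ℝ) < 1 - t * s := by nlinarith [ht.1, ht.2]
    have d0 : HasDerivAt (fun x : ℝ => 1 + x * s) s t := by
      simpa using ((hasDerivAt_id t).mul_const s).const_add 1
    have d0' : HasDerivAt (fun x : ℝ => 1 - x * s) (-s) t := by
      simpa using ((hasDerivAt_id t).mul_const s).const_sub 1
    have d1 : HasDerivAt (fun x : ℝ => Real.log (1 + x * s)) (s / (1 + t * s)) t :=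
      d0.log h1.ne'
    have d2 : HasDerivAt (fun x : ℝ => Real.log (1 - x * s)) (-s / (1 - t * s)) t :=
      d0'.log h2.ne'
    have := (d1.sub d2).const_mul (1 / 2 : ℝ)
    exact this.congr_deriv (by
      rw [hB'_def]
      field_simp
      ring)
  have bound : ∀ t ∈ Ico (0 : ℝ) 1, ‖q * f' (t • q)‖ ≤ B' t := by
    intro t ht
    have h1 : (0 : ℝ) < 1 + t * s := by nlinarith [ht.1, ht.2]
    have h2 : (0 : ℝ) < 1 - t * s := by nlinarith [ht.1, ht.2]
    have hnorm : ‖t • q‖ < 1 := by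
      rw [norm_smul, Real.norm_eq_abs, abs_of_nonneg ht.1]; nlinarith [ht.1, ht.2]
    have hnormeq : ‖t • q‖ = t * s := by
      rw [norm_smul, Real.norm_eq_abs, abs_of_nonneg ht.1]
    calc ‖q * f' (t • q)‖ = s * ‖f' (t • q)‖ := by rw [norm_mul]
      _ ≤ s * (1 / (1 - ‖t • q‖ ^ 2)) :=
          mul_le_mul_of_nonneg_left (hbd (t • q) hnorm) hs0.le
      _ = B' t := by
          rw [hnormeq, hB'_def]
          have h3 : 1 - (t * s) ^ 2 ≠ 0 := by nlinarith
          have h1' : 1 + t * s ≠ 0 := h1.ne'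
          have h2' : 1 - t * s ≠ 0 := h2.ne'
          have h1'' : 1 + s * t ≠ 0 := by rw [mul_comm]; exact h1'
          have h2'' : 1 - s * t ≠ 0 := by rw [mul_comm]; exact h2'
          have h3' : 1 - s ^ 2 * t ^ 2 ≠ 0 := by rw [← mul_pow, mul_comm]; exact h3
          field_simp
          ring
  have main := image_norm_le_of_norm_deriv_right_le_deriv_boundary'
    (f := fun z => ∑' n, g n z) (f' := fun t => q * f' (t • q)) (a := (0 : ℝ)) (b := (1 : ℝ))
    (fun t ht => ((hF' t (hIcc_sub ht)).continuousAt).continuousWithinAt)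
    (fun t ht => (hF' t (hIcc_sub (Ico_subset_Icc_self ht))).hasDerivWithinAt)
    (B := B) (B' := B')
    (by
      have he : (∑' (n : ℕ), g n 0) = f ((0 : ℝ) • q) := hFval 0 hzero
      rw [he, zero_smul, h0, norm_zero, hB_def]
      simp [Real.log_one])
    (fun t ht => (hBderiv t ht).continuousAt.continuousWithinAt)
    (fun t ht => (hBderiv t (Ico_subset_Icc_self ht)).hasDerivWithinAt)
    bound
  have h1mem : (1 : ℝ) ∈ Icc (0 : ℝ) 1 := ⟨zero_le_one, le_refl 1⟩
  have := main h1mem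
  rw [hFval 1 (hIcc_sub h1mem), one_smul] at this
  rw [hB_def] at this
  simp only [one_mul] at this
  rw [← Real.log_div (by linarith : (1 : ℝ) + s ≠ 0) (by linarith : (1 : ℝ) - s ≠ 0)] at this
  exact this
end

section
/- Let F be holomorphic on a neighborhood of the closed disc D̄(a, r) ⊂ ℂ and suppose |F′(z)| ≤ 2|F′(a)| for all z ∈ D̄(a, r). Then for all z ∈ D̄(a, r): |F(z) − F(a)| ≥ |z − a|·(1 − |z − a|/(r − |z − a|))·|F′(a)| whenever |z − a| < r. In particular, |F(z) − F(a)| ≥ (3 − 2√2)·r·|F′(a)| for all z with |z − a| = (1 − √2/2)·r. -/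
open Metric Real Complex

lemma key_deriv_bound (a : ℂ) (r : ℝ) (hr : 0 < r) (F : ℂ → ℂ)
    (U : Set ℂ) (hU : IsOpen U) (hsub : closedBall a r ⊆ U)
    (hF : DifferentiableOn ℂ F U)
    (hder : ∀ z ∈ closedBall a r, ‖deriv F z‖ ≤ 2 * ‖deriv F a‖) :
    ∀ w ∈ ball a r,
      ‖deriv F w - deriv F a‖ ≤ 2 * ‖deriv F a‖ * ‖w - a‖ / (r - ‖w - a‖) := by
  intro w hw
  set G := deriv F with hGdef
  set M := ‖G a‖ with hMdef
  have hx : ‖w - a‖ < r := by rwa [mem_ball, dist_eq_norm] at hw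
  have hrx : 0 < r - ‖w - a‖ := by linarith
  rcases eq_or_ne w a with rfl | hwa
  · simp only [sub_self, norm_zero, mul_zero, zero_div, le_refl]
  have haU : a ∈ U := hsub (mem_closedBall_self hr.le)
  have hG : DifferentiableOn ℂ G U := ((hF.analyticOnNhd hU).deriv).differentiableOn
  have hQ : DifferentiableOn ℂ (dslope G a) U :=
    (differentiableOn_dslope (hU.mem_nhds haU)).mpr hG
  have hC : (∮ ζ in C(a, r), (ζ - w)⁻¹ • dslope G a ζ) = (2 * π * I : ℂ) • dslope G a w :=
    (hQ.mono hsub).circleIntegral_sub_inv_smul hw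
  have hsph : ∀ ζ ∈ sphere a r, ζ ≠ a ∧ ζ ≠ w := by
    intro ζ hζ
    have hζa : ‖ζ - a‖ = r := by rwa [mem_sphere_iff_norm] at hζ
    constructor
    · intro h; rw [h] at hζa; simp at hζa; linarith
    · intro h; rw [h] at hζa; linarith
  have hM2 : ∀ ζ ∈ sphere a r, ‖G ζ‖ ≤ 2 * M :=
    fun ζ hζ => hder ζ (sphere_subset_closedBall hζ)
  -- integrability facts
  have hGc : ContinuousOn G (sphere a r) :=
    hG.continuousOn.mono (sphere_subset_closedBall.trans hsub)
  have hcw : ContinuousOn (fun ζ : ℂ => (ζ - w)⁻¹) (sphere a r) := by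
    apply ContinuousOn.inv₀ (by fun_prop)
    intro ζ hζ; exact sub_ne_zero.mpr (hsph ζ hζ).2
  have hca : ContinuousOn (fun ζ : ℂ => (ζ - a)⁻¹) (sphere a r) := by
    apply ContinuousOn.inv₀ (by fun_prop)
    intro ζ hζ; exact sub_ne_zero.mpr (hsph ζ hζ).1
  have hi1 : CircleIntegrable (fun ζ => (ζ - w)⁻¹ * ((ζ - a)⁻¹ * G ζ)) a r :=
    (hcw.mul (hca.mul hGc)).circleIntegrable hr.le
  have hi2 : CircleIntegrable (fun ζ => (ζ - w)⁻¹ • dslope G a ζ) a r :=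
    (hcw.smul ((hQ.continuousOn).mono (sphere_subset_closedBall.trans hsub))).circleIntegrable hr.le
  have hiw : CircleIntegrable (fun ζ : ℂ => (ζ - w)⁻¹) a r :=
    hcw.circleIntegrable hr.le
  have hia : CircleIntegrable (fun ζ : ℂ => (ζ - a)⁻¹) a r :=
    hca.circleIntegrable hr.le
  -- the difference integral vanishes
  have hdiff : (∮ ζ in C(a, r), ((ζ - w)⁻¹ * ((ζ - a)⁻¹ * G ζ) - (ζ - w)⁻¹ • dslope G a ζ)) = 0 := by
    have heq : Set.EqOn
        (fun ζ : ℂ => (ζ - w)⁻¹ * ((ζ - a)⁻¹ * G ζ) - (ζ - w)⁻¹ • dslope G a ζ)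
        (fun ζ : ℂ => (G a * (w - a)⁻¹) * (ζ - w)⁻¹ - (G a * (w - a)⁻¹) * (ζ - a)⁻¹)
        (sphere a r) := by
      intro ζ hζ
      obtain ⟨hζa, hζw⟩ := hsph ζ hζ
      have hζa' : ζ - a ≠ 0 := sub_ne_zero.mpr hζa
      have hζw' : ζ - w ≠ 0 := sub_ne_zero.mpr hζw
      have hwa' : w - a ≠ 0 := sub_ne_zero.mpr hwa
      simp only [dslope_of_ne G hζa, slope_def_field, div_eq_inv_mul, smul_eq_mul]
      field_simp
      ring
    rw [circleIntegral.integral_congr hr.le heq,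
      circleIntegral.integral_sub ((continuousOn_const.fun_mul hcw).circleIntegrable hr.le)
        ((continuousOn_const.fun_mul hca).circleIntegrable hr.le),
      circleIntegral.integral_const_mul, circleIntegral.integral_const_mul,
      circleIntegral.integral_sub_inv_of_mem_ball hw,
      circleIntegral.integral_sub_inv_of_mem_ball (mem_ball_self hr), sub_self]
  -- hence the Cauchy-type formula with kernel ((ζ-w)(ζ-a))⁻¹
  have hC2 : (∮ ζ in C(a, r), (ζ - w)⁻¹ * ((ζ - a)⁻¹ * G ζ)) = (2 * π * I : ℂ) • dslope G a w := by
    have := circleIntegral.integral_sub hi1 hi2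
    rw [hdiff] at this
    rw [sub_eq_zero.mp this.symm, hC]
  -- norm bound on the integral
  have hbound : ‖∮ ζ in C(a, r), (ζ - w)⁻¹ * ((ζ - a)⁻¹ * G ζ)‖
      ≤ 2 * π * r * (2 * M / ((r - ‖w - a‖) * r)) := by
    apply circleIntegral.norm_integral_le_of_norm_le_const hr.le
    intro ζ hζ
    have hζr : ‖ζ - a‖ = r := by rwa [mem_sphere_iff_norm] at hζ
    have hζw : r - ‖w - a‖ ≤ ‖ζ - w‖ := by
      have h1 := norm_sub_norm_le (ζ - a) (w - a)
      have h2 : ζ - a - (w - a) = ζ - w := by ring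
      rw [h2, hζr] at h1
      linarith
    have hζw0 : (0:ℝ) < ‖ζ - w‖ := lt_of_lt_of_le hrx hζw
    rw [norm_mul, norm_mul, norm_inv, norm_inv, hζr]
    have hGζ : ‖G ζ‖ ≤ 2 * M := hM2 ζ hζ
    have hiv : ‖ζ - w‖⁻¹ ≤ (r - ‖w - a‖)⁻¹ := by
      apply inv_anti₀ hrx hζw
    calc ‖ζ - w‖⁻¹ * (r⁻¹ * ‖G ζ‖) ≤ (r - ‖w - a‖)⁻¹ * (r⁻¹ * (2*M)) := by
          apply mul_le_mul hiv (by apply mul_le_mul_of_nonneg_left hGζ (by positivity))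
            (by positivity) (by positivity)
      _ = 2 * M / ((r - ‖w - a‖) * r) := by
          rw [div_eq_mul_inv, mul_inv]; ring
  -- conclude for dslope
  have hds : ‖dslope G a w‖ ≤ 2 * M / (r - ‖w - a‖) := by
    rw [hC2] at hbound
    have hn : ‖(2 * π * I : ℂ) • dslope G a w‖ = 2 * π * ‖dslope G a w‖ := by
      rw [norm_smul]
      simp [Real.pi_nonneg]
    rw [hn] at hbound
    set q := ‖dslope G a w‖ with hqd
    set d := 2 * M / ((r - ‖w - a‖) * r) with hd
    have hdm : d * ((r - ‖w - a‖) * r) = 2 * M := div_mul_cancel₀ _ (by positivity)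
    have hq : q ≤ r * d := by nlinarith [Real.pi_pos]
    rw [le_div_iff₀ hrx]
    nlinarith [mul_le_mul_of_nonneg_right hq hrx.le, hdm]
  have hfact : G w - G a = (w - a) * dslope G a w := by
    rw [dslope_of_ne G hwa, slope_def_field]
    rw [div_eq_inv_mul, ← mul_assoc, mul_inv_cancel₀ (sub_ne_zero.mpr hwa), one_mul]
  rw [hfact, norm_mul]
  calc ‖w - a‖ * ‖dslope G a w‖ ≤ ‖w - a‖ * (2 * M / (r - ‖w - a‖)) :=
        mul_le_mul_of_nonneg_left hds (norm_nonneg _)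
    _ = 2 * M * ‖w - a‖ / (r - ‖w - a‖) := by ring

lemma main_ineq (a : ℂ) (r : ℝ) (hr : 0 < r) (F : ℂ → ℂ)
    (U : Set ℂ) (hU : IsOpen U) (hsub : closedBall a r ⊆ U)
    (hF : DifferentiableOn ℂ F U)
    (hder : ∀ z ∈ closedBall a r, ‖deriv F z‖ ≤ 2 * ‖deriv F a‖) :
    ∀ z : ℂ, ‖z - a‖ < r →
      ‖z - a‖ * (1 - ‖z - a‖ / (r - ‖z - a‖)) * ‖deriv F a‖ ≤ ‖F z - F a‖ := by
  intro z hx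
  have hkey := key_deriv_bound a r hr F U hU hsub hF hder
  set G := deriv F with hGdef
  set M := ‖G a‖ with hMdef
  set x := ‖z - a‖ with hxdef
  have hM0 : 0 ≤ M := norm_nonneg _
  have hx0 : 0 ≤ x := norm_nonneg _
  have hrx : 0 < r - x := by linarith
  have hG : DifferentiableOn ℂ G U := ((hF.analyticOnNhd hU).deriv).differentiableOn
  set γ : ℝ → ℂ := fun t => a + (t : ℂ) * (z - a) with hγ
  have hγnorm : ∀ t : ℝ, ‖γ t - a‖ = |t| * x := by
    intro t
    rw [hγ]
    simp only [add_sub_cancel_left]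
    rw [norm_mul, Complex.norm_real, Real.norm_eq_abs]
  have hγmem : ∀ t : ℝ, t ∈ Set.Icc (0:ℝ) 1 → γ t ∈ ball a r := by
    rintro t ⟨ht0, ht1⟩
    rw [mem_ball, dist_eq_norm, hγnorm, _root_.abs_of_nonneg ht0]
    nlinarith
  have hγU : ∀ t ∈ Set.Icc (0:ℝ) 1, γ t ∈ U :=
    fun t ht => hsub (ball_subset_closedBall (hγmem t ht))
  have hd : ∀ t ∈ Set.uIcc (0:ℝ) 1,
      HasDerivAt (fun s : ℝ => F (γ s)) ((z - a) • G (γ t)) t := by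
    intro t ht
    rw [Set.uIcc_of_le zero_le_one] at ht
    have h1 : HasDerivAt γ (z - a) t := by
      have hc : HasDerivAt (fun s : ℝ => (s : ℂ)) 1 t := by
        simpa using (hasDerivAt_id t).ofReal_comp
      exact ((hc.mul_const (z - a)).const_add a).congr_deriv (one_mul _)
    have h2 : HasDerivAt F (G (γ t)) (γ t) :=
      (hF.differentiableAt (hU.mem_nhds (hγU t ht))).hasDerivAt
    exact h2.scomp t h1
  have hcont : ContinuousOn (fun t : ℝ => (z - a) • G (γ t)) (Set.uIcc (0:ℝ) 1) := by
    rw [Set.uIcc_of_le zero_le_one]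
    exact continuousOn_const.fun_smul ((hG.continuousOn.comp (by fun_prop) hγU))
  have hint : IntervalIntegrable (fun t : ℝ => (z - a) • G (γ t)) MeasureTheory.volume 0 1 := by
    apply hcont.intervalIntegrable
  have hFTC : (∫ t in (0:ℝ)..1, (z - a) • G (γ t)) = F z - F a := by
    rw [intervalIntegral.integral_eq_sub_of_hasDerivAt hd hint]
    have h1 : γ 1 = z := by rw [hγ]; push_cast; ring
    have h0 : γ 0 = a := by rw [hγ]; push_cast; ring
    rw [h1, h0]
  have hsplit : F z - F a - (z - a) * G a
      = ∫ t in (0:ℝ)..1, ((z - a) • G (γ t) - (z - a) • G a) := by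
    rw [intervalIntegral.integral_sub hint (intervalIntegrable_const), hFTC]
    simp
  have hE : ‖F z - F a - (z - a) * G a‖ ≤ M * x ^ 2 / (r - x) := by
    rw [hsplit]
    have hb : ‖∫ t in (0:ℝ)..1, ((z - a) • G (γ t) - (z - a) • G a)‖
        ≤ |∫ t in (0:ℝ)..1, (2 * M * x ^ 2 / (r - x)) * t| := by
      apply intervalIntegral.norm_integral_le_abs_of_norm_le
      · filter_upwards [MeasureTheory.ae_restrict_mem measurableSet_uIoc] with t ht
        rw [Set.uIoc_of_le zero_le_one] at ht
        obtain ⟨ht0, ht1⟩ := ht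
        have hmem : γ t ∈ ball a r := hγmem t ⟨ht0.le, ht1⟩
        have hkb := hkey (γ t) hmem
        rw [hγnorm, _root_.abs_of_nonneg ht0.le] at hkb
        have h1 : 0 ≤ t * x := mul_nonneg ht0.le hx0
        have h2 : t * x ≤ x := by nlinarith
        have hmono : 2 * M * (t * x) / (r - t * x) ≤ 2 * M * (t * x) / (r - x) := by
          gcongr <;> nlinarith
        have : ‖(z - a) • G (γ t) - (z - a) • G a‖ = x * ‖G (γ t) - G a‖ := by
          rw [← smul_sub, norm_smul, hxdef]
        rw [this]
        calc x * ‖G (γ t) - G a‖ ≤ x * (2 * M * (t * x) / (r - x)) := by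
              apply mul_le_mul_of_nonneg_left _ hx0
              exact le_trans hkb hmono
          _ = 2 * M * x ^ 2 / (r - x) * t := by ring
      · apply ContinuousOn.intervalIntegrable
        fun_prop
    rw [intervalIntegral.integral_const_mul, integral_id] at hb
    have habs : |2 * M * x ^ 2 / (r - x) * (((1:ℝ) ^ 2 - 0 ^ 2) / 2)| = M * x ^ 2 / (r - x) := by
      rw [_root_.abs_of_nonneg (by positivity)]
      ring
    rw [habs] at hb
    exact hb
  have h1 : ‖(z - a) * G a‖ = x * M := by rw [norm_mul]
  have h2 := norm_sub_le (F z - F a) (F z - F a - (z - a) * G a)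
  have h3 : F z - F a - (F z - F a - (z - a) * G a) = (z - a) * G a := by ring
  rw [h3, h1] at h2
  have heq : x * (1 - x / (r - x)) * M = x * M - M * x ^ 2 / (r - x) := by
    field_simp
  linarith

theorem stmt_19 (a : ℂ) (r : ℝ) (hr : 0 < r) (F : ℂ → ℂ)
    (U : Set ℂ) (hU : IsOpen U) (hsub : closedBall a r ⊆ U)
    (hF : DifferentiableOn ℂ F U)
    (hder : ∀ z ∈ closedBall a r, ‖deriv F z‖ ≤ 2 * ‖deriv F a‖) :
    (∀ z : ℂ, ‖z - a‖ < r →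
      ‖z - a‖ * (1 - ‖z - a‖ / (r - ‖z - a‖)) * ‖deriv F a‖ ≤ ‖F z - F a‖) ∧
    (∀ z : ℂ, ‖z - a‖ = (1 - Real.sqrt 2 / 2) * r →
      (3 - 2 * Real.sqrt 2) * r * ‖deriv F a‖ ≤ ‖F z - F a‖) := by
  have hmain := main_ineq a r hr F U hU hsub hF hder
  refine ⟨hmain, ?_⟩
  intro z hz
  set s := Real.sqrt 2 with hs
  have hs2 : s ^ 2 = 2 := Real.sq_sqrt (by norm_num)
  have hs0 : 0 < s := Real.sqrt_pos.mpr (by norm_num)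
  have hs1 : 1 < s := by nlinarith
  have hslt : s < 2 := by nlinarith
  have hxr : ‖z - a‖ < r := by rw [hz]; nlinarith
  have h1 := hmain z hxr
  set A := ‖deriv F a‖ with hA
  have heq : ‖z - a‖ * (1 - ‖z - a‖ / (r - ‖z - a‖)) * A
      = (3 - 2 * s) * r * A := by
    rw [hz]
    have hd : r - (1 - s / 2) * r = s / 2 * r := by ring
    rw [hd]
    have hne : s / 2 * r ≠ 0 := by positivity
    field_simp
    ring_nf
    linear_combination (2 * A) * hs2
  linarith
end
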